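/- arXiv:2209.05803 — 15 statements merged into one kernel-verified Lean document; each statement's English description precedes it below -/
import Mathlib

section
/- Let S be a numerical semigroup (a submonoid of ℕ with finite complement) and x ∈ S. Then S \ {x} is a numerical semigroup if and only if x is a minimal generator of S (i.e., x ≠ 0 and x cannot be written as s₁ + s₂ with s₁, s₂ ∈ S \ {0}). -/
open Set

/-- A numerical semigroup: a submonoid of ℕ with finite complement. -/
def IsNumSgp (S : Set ℕ) : Prop :=
  0 ∈ S ∧ (∀ a ∈ S, ∀ b ∈ S, a + b ∈ S) ∧ Sᶜ.Finite

/-- The Frobenius number: the largest gap. -/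
noncomputable def frob (S : Set ℕ) : ℕ := sSup Sᶜ

/-- The multiplicity: the least nonzero element. -/
noncomputable def mult (S : Set ℕ) : ℕ := sInf (S \ {0})

/-- The genus: the number of gaps. -/
noncomputable def genus (S : Set ℕ) : ℕ := Sᶜ.ncard

/-- The number of left elements: elements of S smaller than the Frobenius number. -/
noncomputable def leftEls (S : Set ℕ) : ℕ := {s ∈ S | s < frob S}.ncard

/-- x is a minimal generator of S: nonzero and not a sum of two nonzero elements of S. -/
def IsMinGen (S : Set ℕ) (x : ℕ) : Prop :=
  x ∈ S ∧ x ≠ 0 ∧ ¬ ∃ a ∈ S, ∃ b ∈ S, a ≠ 0 ∧ b ≠ 0 ∧ x = a + b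

/-- The embedding dimension: number of minimal generators. -/
noncomputable def edim (S : Set ℕ) : ℕ := {x | IsMinGen S x}.ncard

/-- The set of special gaps of S. -/
def SG (S : Set ℕ) : Set ℕ :=
  {h | h ∉ S ∧ 2 * h ∈ S ∧ ∀ s ∈ S, s ≠ 0 → h + s ∈ S}

/-- Irreducible numerical semigroup (characterization via special gaps). -/
def IsIrred (S : Set ℕ) : Prop := SG S = {frob S}

/-- Ordinary numerical semigroup. -/
def IsOrdinary (S : Set ℕ) : Prop := ∃ c, S = {0} ∪ {m | c ≤ m}

/-- Special numerical semigroup: every special gap other than F(S) is below the multiplicity. -/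
def IsSpecial (S : Set ℕ) : Prop := ∀ h ∈ SG S, h ≠ frob S → h < mult S

/-- The transform 𝒜, defined on non-special numerical semigroups. -/
noncomputable def Atrans (S : Set ℕ) : Set ℕ :=
  (S ∪ {sSup (SG S \ {frob S})}) \ {mult S}

/-- The sub-Frobenius number: the largest gap different from F(S). -/
noncomputable def subFrob (S : Set ℕ) : ℕ := sSup (Sᶜ \ {frob S})

/-- Almost-ordinary: exactly one gap greater than the multiplicity. -/
noncomputable def IsAlmostOrdinary (S : Set ℕ) : Prop := {h | h ∉ S ∧ mult S < h}.ncard = 1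

/-- The transform ℬ of Bras-Amorós. -/
noncomputable def Btrans (S : Set ℕ) : Set ℕ := (S \ {mult S}) ∪ {subFrob S}


theorem sgp_remove_minimal_generator (S : Set ℕ) (hS : IsNumSgp S) (x : ℕ) (hx : x ∈ S) :
    IsNumSgp (S \ {x}) ↔ IsMinGen S x := by
  obtain ⟨h0, hadd, hfin⟩ := hS
  constructor
  · rintro ⟨h0', hadd', -⟩
    refine ⟨hx, ?_, ?_⟩
    · rintro rfl; exact h0'.2 rfl
    · rintro ⟨a, ha, b, hb, ha0, hb0, rfl⟩
      have hax : a ≠ a + b := by omega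
      have hbx : b ≠ a + b := by omega
      exact (hadd' a ⟨ha, hax⟩ b ⟨hb, hbx⟩).2 rfl
  · rintro ⟨-, hx0, hmin⟩
    refine ⟨⟨h0, fun h => hx0 h.symm⟩, ?_, ?_⟩
    · rintro a ⟨ha, ha'⟩ b ⟨hb, hb'⟩
      refine ⟨hadd a ha b hb, fun hab => ?_⟩
      simp only [Set.mem_singleton_iff] at hab ha' hb'
      rcases Nat.eq_zero_or_pos a with rfl | hap
      · exact hb' (by omega)
      rcases Nat.eq_zero_or_pos b with rfl | hbp
      · exact ha' (by omega)
      exact hmin ⟨a, ha, b, hb, by omega, by omega, hab.symm⟩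
    · have : (S \ {x})ᶜ = Sᶜ ∪ {x} := by
        ext y; simp [Set.mem_diff]; tauto
      rw [this]
      exact hfin.union (Set.finite_singleton x)
end

section
/- Let g, n ∈ ℕ with g > 2 and 2 ≤ n ≤ g. Then the set S = {0} ∪ {g, g+1, …, g+n-2} ∪ {m ∈ ℕ : m ≥ g+n} is a numerical semigroup with Frobenius number g+n-1, genus g, and exactly n elements smaller than its Frobenius number. -/
open Set

theorem almost_ordinary_invariants (g n : ℕ) (hg : g > 2) (hn2 : 2 ≤ n) (hng : n ≤ g)
    (S : Set ℕ)
    (hSdef : S = {0} ∪ {x | g ≤ x ∧ x ≤ g + n - 2} ∪ {x | g + n ≤ x}) :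
    IsNumSgp S ∧ frob S = g + n - 1 ∧ genus S = g ∧ leftEls S = n := by

  have hmemS : ∀ x, x ∈ S ↔ (x = 0 ∨ (g ≤ x ∧ x ≤ g + n - 2) ∨ g + n ≤ x) := by
    intro x; rw [hSdef]; simp [Set.mem_union, Set.mem_setOf_eq]; tauto
  have hcompl : Sᶜ = ↑(Finset.Icc 1 (g - 1) ∪ {g + n - 1}) := by
    ext x
    simp only [Set.mem_compl_iff, hmemS, Finset.coe_union, Set.mem_union,
      Finset.coe_Icc, Set.mem_Icc, Finset.coe_singleton, Set.mem_singleton_iff]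
    omega
  have hfrob : frob S = g + n - 1 := by
    apply le_antisymm
    · apply csSup_le
      · exact ⟨g + n - 1, by simp [hmemS]; omega⟩
      · intro b hb
        simp only [Set.mem_compl_iff, hmemS] at hb
        omega
    · apply le_csSup
      · rw [hcompl]; exact (Finset.Icc 1 (g-1) ∪ {g+n-1}).finite_toSet.bddAbove
      · simp [hmemS]; omega
  refine ⟨⟨?_, ?_, ?_⟩, hfrob, ?_, ?_⟩
  · simp [hmemS]
  · intro a ha b hb
    rw [hmemS] at ha hb ⊢
    omega
  · rw [hcompl]; exact (Finset.Icc 1 (g-1) ∪ {g+n-1}).finite_toSet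
  · rw [genus, hcompl, Set.ncard_coe_finset, Finset.card_union_of_disjoint]
    · rw [Nat.card_Icc]; simp; omega
    · simp [Finset.disjoint_singleton_right]; omega
  · have : {s ∈ S | s < frob S} = ↑({0} ∪ Finset.Icc g (g + n - 2) : Finset ℕ) := by
      ext x
      simp only [Set.mem_setOf_eq, hmemS, hfrob, Finset.coe_union,
        Set.mem_union, Finset.coe_Icc, Set.mem_Icc, Finset.coe_singleton,
        Set.mem_singleton_iff]
      omega
    rw [leftEls, this, Set.ncard_coe_finset, Finset.card_union_of_disjoint]
    · rw [Nat.card_Icc]; simp; omega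
    · simp [Finset.disjoint_singleton_left]; omega
end

section
/- Let S be a numerical semigroup with Frobenius number F(S) > 2·m(S), where m(S) is the multiplicity. If S is not irreducible, then there exists a special gap h of S with h ≠ F(S) and h > m(S). -/
open Set

theorem non_irreducible_large_frobenius_special_gap (S : Set ℕ) (hS : IsNumSgp S)
    (hF : frob S > 2 * mult S) (hirr : ¬ IsIrred S) :
    ∃ h ∈ SG S, h ≠ frob S ∧ h > mult S := by

  obtain ⟨h0S, hadd, hfin⟩ := hS
  have hbdd : BddAbove Sᶜ := hfin.bddAbove
  have hgt : ∀ x, frob S < x → x ∈ S := by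
    intro x hx
    by_contra hxS
    exact absurd (le_csSup hbdd hxS) (not_le.mpr hx)
  have hFpos : 0 < frob S := lt_of_le_of_lt (Nat.zero_le _) hF
  have hne : Sᶜ.Nonempty := by
    by_contra h
    rw [Set.not_nonempty_iff_eq_empty] at h
    rw [frob, h] at hFpos
    simp at hFpos
  have hFmem : frob S ∉ S := Nat.sSup_mem hne hbdd
  have hmmem : mult S ∈ S \ {0} := by
    apply Nat.sInf_mem
    exact ⟨frob S + 1, hgt _ (Nat.lt_succ_self _), by simp⟩
  have hmpos : 0 < mult S := by
    have := hmmem.2; simp at this; omega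
  have hmle : ∀ s ∈ S, s ≠ 0 → mult S ≤ s := fun s hs hs0 => Nat.sInf_le ⟨hs, hs0⟩
  have hFSG : frob S ∈ SG S :=
    ⟨hFmem, hgt _ (by omega), fun s hs hs0 => hgt _ (by
      have := hmle s hs hs0; omega)⟩
  have hex : ∃ h0 ∈ SG S, h0 ≠ frob S := by
    by_contra hc
    push_neg at hc
    apply hirr
    ext x
    constructor
    · intro hx; exact hc x hx
    · intro hx; rw [Set.mem_singleton_iff] at hx; rw [hx]; exact hFSG
  obtain ⟨h0, hh0, hh0F⟩ := hex
  obtain ⟨h0nS, h02, h0sp⟩ := hh0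
  have h0pos : 0 < h0 := by
    rcases Nat.eq_zero_or_pos h0 with h | h
    · exact absurd (h ▸ h0S) h0nS
    · exact h
  rcases lt_or_ge (mult S) h0 with hcase | hcase
  · exact ⟨h0, ⟨h0nS, h02, h0sp⟩, hh0F, hcase⟩
  · -- h0 ≤ mult S, and h0 ≠ mult S since mult S ∈ S
    have h0lt : h0 < mult S := by
      rcases eq_or_lt_of_le hcase with h | h
      · exact absurd (h ▸ hmmem.1) h0nS
      · exact h
    refine ⟨frob S - h0, ⟨?_, ?_, ?_⟩, by omega, by omega⟩
    · intro hmem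
      have : h0 + (frob S - h0) ∈ S := h0sp _ hmem (by omega)
      rw [Nat.add_sub_cancel' (by omega)] at this
      exact hFmem this
    · exact hgt _ (by omega)
    · intro s hs hs0
      have := hmle s hs hs0
      exact hgt _ (by omega)
end

section
/- Let S be a special numerical semigroup (every special gap h with h ≠ F(S) satisfies h < m(S)). If S is neither irreducible nor ordinary, then every natural number x with m(S) ≤ x < F(S) belongs to S. -/
open Set

theorem special_structure (S : Set ℕ) (hS : IsNumSgp S) (hsp : IsSpecial S)
    (hirr : ¬ IsIrred S) (hord : ¬ IsOrdinary S) :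
    ∀ x : ℕ, mult S ≤ x → x < frob S → x ∈ S := by

  intro x hmx hxF
  by_contra hx
  obtain ⟨h0S, hadd, hfin⟩ := hS
  have hbdd : BddAbove Sᶜ := hfin.bddAbove
  have hFne : (Sᶜ).Nonempty := ⟨x, hx⟩
  have hFmem : frob S ∈ Sᶜ := Nat.sSup_mem hFne hbdd
  have hle : ∀ y, y ∉ S → y ≤ frob S := fun y hy => le_csSup hbdd hy
  have hmne : (S \ {0}).Nonempty := by
    refine ⟨frob S + 1, ?_, by simp⟩
    by_contra hc
    have := hle _ hc
    omega
  have hmmem : mult S ∈ S \ {0} := Nat.sInf_mem hmne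
  have hmle : ∀ s ∈ S, s ≠ 0 → mult S ≤ s := fun s hs hs0 => Nat.sInf_le ⟨hs, hs0⟩
  have hm1 : 1 ≤ mult S := Nat.one_le_iff_ne_zero.mpr hmmem.2
  have hF1 : 1 ≤ frob S := by
    rcases Nat.eq_zero_or_pos (frob S) with h | h
    · exact absurd (h ▸ h0S) hFmem
    · exact h
  have hFSG : frob S ∈ SG S := by
    refine ⟨hFmem, ?_, ?_⟩
    · by_contra h2
      have := hle _ h2
      omega
    · intro s hs hs0
      by_contra hns
      have h1 := hle _ hns
      have h2 : 1 ≤ s := Nat.pos_of_ne_zero hs0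
      omega
  have hex : ∃ h0 ∈ SG S, h0 ≠ frob S := by
    by_contra hc
    push_neg at hc
    exact hirr (Set.eq_singleton_iff_unique_mem.mpr ⟨hFSG, hc⟩)
  obtain ⟨h0, hh0SG, hh0F⟩ := hex
  have hh0m : h0 < mult S := hsp h0 hh0SG hh0F
  have hh01 : 1 ≤ h0 := by
    rcases Nat.eq_zero_or_pos h0 with h | h
    · exact absurd (h ▸ h0S) hh0SG.1
    · exact h
  have hh0lt : h0 < frob S := by omega
  have hFh0 : frob S - h0 ∉ S := by
    intro hmem
    have h1 : h0 + (frob S - h0) ∈ S := hh0SG.2.2 _ hmem (by omega)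
    have h2 : h0 + (frob S - h0) = frob S := by omega
    exact hFmem (h2 ▸ h1)
  have hGne : (Sᶜ \ {frob S}).Nonempty := ⟨x, hx, by simp; omega⟩
  have hGbdd : BddAbove (Sᶜ \ {frob S}) := (hfin.subset diff_subset).bddAbove
  set h := sSup (Sᶜ \ {frob S}) with hhdef
  have hhmem : h ∈ Sᶜ \ {frob S} := Nat.sSup_mem hGne hGbdd
  have hhle : ∀ y, y ∉ S → y ≠ frob S → y ≤ h := fun y hy hyF => le_csSup hGbdd ⟨hy, hyF⟩
  have hxh : x ≤ h := hhle x hx (by omega)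
  have hhne : h ≠ frob S := hhmem.2
  have hhF : h ≤ frob S := hle h hhmem.1
  have hFh0h : frob S - h0 ≤ h := hhle _ hFh0 (by omega)
  have hnSG : h ∉ SG S := by
    intro hc
    have := hsp h hc hhne
    omega
  rw [SG, Set.mem_setOf_eq] at hnSG
  push_neg at hnSG
  by_cases h2 : 2 * h ∈ S
  · obtain ⟨s, hsS, hs0, hns⟩ := hnSG hhmem.1 h2
    have hsm : mult S ≤ s := hmle s hsS hs0
    have h3 : h + s ≤ frob S := hle _ hns
    have h4 : h + s = frob S := by
      by_contra hne
      have := hhle _ hns hne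
      omega
    omega
  · have h3 : 2 * h ≤ frob S := hle _ h2
    have h4 : 2 * h = frob S := by
      by_contra hne
      have := hhle _ h2 hne
      omega
    omega
end

section
/- Let S be a special numerical semigroup with genus g > 3 that is neither irreducible nor ordinary. Then S = {0} ∪ {g, g+1, …, g+n-2} ∪ {m : m ≥ g+n} for some n with 2 ≤ n < g-1 (i.e., S is almost-ordinary). -/
open Set

theorem special_is_almost_ordinary (S : Set ℕ) (hS : IsNumSgp S) (hsp : IsSpecial S)
    (hgen : genus S > 3) (hirr : ¬ IsIrred S) (hord : ¬ IsOrdinary S) :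
    ∃ n : ℕ, 2 ≤ n ∧ n < genus S - 1 ∧
      S = {0} ∪ {x | genus S ≤ x ∧ x ≤ genus S + n - 2} ∪ {x | genus S + n ≤ x} := by
  obtain ⟨h0, hadd, hfin⟩ := hS
  set F := frob S with hFdef
  set m := mult S with hmdef
  -- basic facts
  have hcne : Sᶜ.Nonempty := by
    apply Set.nonempty_of_ncard_ne_zero
    have : genus S ≠ 0 := by omega
    simpa [genus] using this
  have hFmem : F ∉ S := by
    have : F ∈ Sᶜ := Nat.sSup_mem hcne hfin.bddAbove
    simpa using this
  have hFle : ∀ x, x ∉ S → x ≤ F := fun x hx => le_csSup hfin.bddAbove hx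
  have hSne : (S \ {0}).Nonempty := by
    have hinf : S.Infinite := by
      have := hfin.infinite_compl
      simpa using this
    exact (hinf.diff (Set.finite_singleton 0)).nonempty
  have hmmem : m ∈ S \ {0} := Nat.sInf_mem hSne
  have hmS : m ∈ S := hmmem.1
  have hm0 : m ≠ 0 := hmmem.2
  have hmle : ∀ x ∈ S, x ≠ 0 → m ≤ x := fun x hx hx0 => Nat.sInf_le ⟨hx, hx0⟩
  have hgap_lt : ∀ x : ℕ, x ≠ 0 → x < m → x ∉ S := by
    intro x hx0 hxm hxS
    exact absurd (hmle x hxS hx0) (by omega)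
  have hF0 : F ≠ 0 := fun h => hFmem (h ▸ h0)
  -- F > m (else S is ordinary)
  have hmltF : m < F := by
    by_contra hc
    push_neg at hc
    apply hord
    refine ⟨m, ?_⟩
    ext x
    simp only [Set.mem_union, Set.mem_singleton_iff, Set.mem_setOf_eq]
    constructor
    · intro hx
      by_cases hx0 : x = 0
      · exact Or.inl hx0
      · exact Or.inr (hmle x hx hx0)
    · rintro (rfl | hx)
      · exact h0
      · by_contra hxS
        have h1 := hFle x hxS
        have hxm : x = m := by omega
        exact hxS (hxm ▸ hmS)
  -- existence of a special gap h ≠ F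
  have hFSG : F ∈ SG S := by
    refine ⟨hFmem, ?_, ?_⟩
    · by_contra hc
      have := hFle _ hc
      omega
    · intro s hs hs0
      by_contra hc
      have := hFle _ hc
      have := hmle s hs hs0
      omega
  obtain ⟨h, hhSG, hhF⟩ : ∃ h ∈ SG S, h ≠ F := by
    by_contra hc
    push_neg at hc
    apply hirr
    apply Set.eq_singleton_iff_unique_mem.mpr
    exact ⟨hFSG, hc⟩
  have hhm : h < m := hsp h hhSG hhF
  obtain ⟨hhS, hh2, hhadd⟩ := hhSG
  have hh0 : h ≠ 0 := fun hc => hhS (hc ▸ h0)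
  have hhF' : h < F := by omega
  -- F - h is a gap
  have hFh : F - h ∉ S := by
    intro hc
    have h1 : F - h ≠ 0 := by omega
    have h2 := hhadd _ hc h1
    have : h + (F - h) = F := by omega
    rw [this] at h2
    exact hFmem h2
  -- main lemma: no gaps strictly between m and F
  have hmain : ∀ x, m < x → x < F → x ∈ S := by
    by_contra hc
    push_neg at hc
    obtain ⟨x, hx1, hx2, hx3⟩ := hc
    set T : Set ℕ := {y | y ∉ S ∧ m < y ∧ y < F} with hTdef
    have hTne : T.Nonempty := ⟨x, hx3, hx1, hx2⟩
    have hTfin : T.Finite := hfin.subset (fun y hy => hy.1)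
    set f := sSup T with hfdef
    have hfT : f ∈ T := Nat.sSup_mem hTne hTfin.bddAbove
    have hfmax : ∀ y ∈ T, y ≤ f := fun y hy => le_csSup hTfin.bddAbove hy
    obtain ⟨hfS, hmf, hfF⟩ := hfT
    by_cases hFf : (F - f) ∈ S
    · -- then F ≥ f + m, and F - h is a gap in (m,F) exceeding f
      have hFf0 : F - f ≠ 0 := by omega
      have hFfm : m ≤ F - f := hmle _ hFf hFf0
      have : F - h ∈ T := ⟨hFh, by omega, by omega⟩
      have := hfmax _ this
      omega
    · by_cases h2f : 2 * f = F
      · -- F = 2f, and again F - h is a gap in (m,F) exceeding f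
        have : F - h ∈ T := ⟨hFh, by omega, by omega⟩
        have := hfmax _ this
        omega
      · -- f is a special gap > m : contradiction with speciality
        have hfSG : f ∈ SG S := by
          refine ⟨hfS, ?_, ?_⟩
          · by_contra hc2
            have hle := hFle _ hc2
            have : 2 * f ∈ T := ⟨hc2, by omega, by omega⟩
            have := hfmax _ this
            omega
          · intro s hs hs0
            by_contra hc2
            have hle := hFle _ hc2
            have hms := hmle s hs hs0
            have hne : f + s ≠ F := by
              intro hc3
              apply hFf
              have : F - f = s := by omega
              rw [this]; exact hs
            have : f + s ∈ T := ⟨hc2, by omega, by omega⟩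
            have := hfmax _ this
            omega
        have := hsp f hfSG (by omega)
        omega
  -- characterization of the gap set
  have hcompl : ∀ x : ℕ, x ∉ S ↔ ((1 ≤ x ∧ x < m) ∨ x = F) := by
    intro x
    constructor
    · intro hx
      have hx0 : x ≠ 0 := fun hc => hx (hc ▸ h0)
      have hxF := hFle x hx
      by_cases hxm : x < m
      · exact Or.inl ⟨by omega, hxm⟩
      · push_neg at hxm
        right
        by_contra hc
        have hxm' : m < x := by
          rcases Nat.lt_or_ge m x with h' | h'
          · exact h'
          · have : x = m := by omega
            exact absurd (this ▸ hmS) hx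
        exact hx (hmain x hxm' (by omega))
    · rintro (⟨h1, h2⟩ | rfl)
      · exact hgap_lt x (by omega) h2
      · exact hFmem
  -- compute the genus: g = m
  have hSc : Sᶜ = Set.Ico 1 m ∪ {F} := by
    ext x
    simp only [Set.mem_compl_iff, Set.mem_union, Set.mem_Ico, Set.mem_singleton_iff]
    exact hcompl x
  have hgenus : genus S = m := by
    rw [genus, hSc, Set.ncard_union_eq]
    · rw [← Finset.coe_Ico, Set.ncard_coe_finset, Nat.card_Ico, Set.ncard_singleton]
      omega
    · simp only [Set.disjoint_singleton_right, Set.mem_Ico]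
      omega
  -- F < h + m, hence F ≤ 2m - 3
  have hFhm : F < h + m := by
    have := (hcompl (F - h)).mp hFh
    omega
  have hF3 : F ≤ 2 * m - 3 := by
    by_contra hc
    push_neg at hc
    have h1 : h = m - 1 := by omega
    have h2 : 2 * h = F := by omega
    exact hFmem (h2 ▸ hh2)
  -- conclusion
  refine ⟨F - m + 1, by omega, by rw [hgenus]; omega, ?_⟩
  rw [hgenus]
  ext x
  simp only [Set.mem_union, Set.mem_singleton_iff, Set.mem_setOf_eq]
  have hch := hcompl x
  constructor
  · intro hxS
    have hnp : ¬((1 ≤ x ∧ x < m) ∨ x = F) := fun hp => (hch.mpr hp) hxS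
    omega
  · intro hR
    by_contra hxS
    have := hch.mp hxS
    omega
end

section
/- Every special numerical semigroup S satisfies Wilf's inequality: e(S)·n(S) ≥ F(S) + 1, where e(S) is the embedding dimension, n(S) the number of elements of S less than F(S), and F(S) the Frobenius number. -/
open Set

/- ## Auxiliary lemmas -/

lemma wilf_ncard_Ico (a b : ℕ) : (Set.Ico a b).ncard = b - a := by
  rw [Set.ncard_eq_toFinset_card']; simp

lemma wilf_all_mem (S : Set ℕ) (h0 : 0 ∈ S)
    (hadd : ∀ a ∈ S, ∀ b ∈ S, a + b ∈ S) (h1 : 1 ∈ S) : ∀ n, n ∈ S := by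
  intro n
  induction n with
  | zero => exact h0
  | succ k ih => exact hadd k ih 1 h1

lemma wilf_gen_two (S : Set ℕ) (a b : ℕ)
    (hMG : {x | IsMinGen S x} = ({a, b} : Set ℕ)) :
    ∀ x ∈ S, ∃ α β, x = α * a + β * b := by
  intro x
  induction x using Nat.strong_induction_on with
  | _ x ih =>
    intro hx
    rcases eq_or_ne x 0 with rfl | hx0
    · exact ⟨0, 0, by simp⟩
    by_cases hmg : IsMinGen S x
    · have hx' : x ∈ ({a, b} : Set ℕ) := by rw [← hMG]; exact hmg
      rcases hx' with rfl | hx'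
      · exact ⟨1, 0, by simp⟩
      · rcases hx' with rfl
        exact ⟨0, 1, by simp⟩
    · have hex : ∃ u ∈ S, ∃ v ∈ S, u ≠ 0 ∧ v ≠ 0 ∧ x = u + v := by
        by_contra hno
        exact hmg ⟨hx, hx0, hno⟩
      obtain ⟨u, hu, v, hv, hu0, hv0, rfl⟩ := hex
      obtain ⟨α₁, β₁, h1⟩ := ih u (by omega) hu
      obtain ⟨α₂, β₂, h2⟩ := ih v (by omega) hv
      exact ⟨α₁ + α₂, β₁ + β₂, by rw [h1, h2]; ring⟩

theorem special_satisfies_wilf (S : Set ℕ) (hS : IsNumSgp S) (hne : S ≠ Set.univ)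
    (hsp : IsSpecial S) :
    edim S * leftEls S ≥ frob S + 1 := by
  obtain ⟨h0, hadd, hfin⟩ := hS
  -- basic setup
  set F := frob S with hFdef
  set m := mult S with hmdef
  have hcne : Sᶜ.Nonempty := Set.nonempty_compl.mpr hne
  have hbdd : BddAbove Sᶜ := hfin.bddAbove
  have hFgap : F ∉ S := Nat.sSup_mem hcne hbdd
  have hle : ∀ x, x ∉ S → x ≤ F := fun x hx => le_csSup hbdd hx
  have hgt : ∀ x, F < x → x ∈ S := by
    intro x hx
    by_contra hxS
    exact absurd (hle x hxS) (by omega)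
  have h1S : (1 : ℕ) ∉ S := by
    intro h1
    exact hne (Set.eq_univ_of_forall (wilf_all_mem S h0 hadd h1))
  have hF1 : 1 ≤ F := hle 1 h1S
  have hSd : (F + 1) ∈ S \ {0} := ⟨hgt _ (by omega), by simp⟩
  have hmS : m ∈ S \ {0} := Nat.sInf_mem ⟨F + 1, hSd⟩
  have hmmem : m ∈ S := hmS.1
  have hm0 : m ≠ 0 := by simpa using hmS.2
  have hmle : ∀ s ∈ S, s ≠ 0 → m ≤ s := fun s hs hs0 => Nat.sInf_le ⟨hs, hs0⟩
  have hm2 : 2 ≤ m := by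
    rcases Nat.lt_or_ge m 2 with h | h
    · interval_cases m
      · omega
      · exact absurd hmmem h1S
    · exact h
  have hFm : F ≠ m := fun h => hFgap (h ▸ hmmem)
  have hmF1 : m - 1 ≤ F := hle (m - 1) (by
    intro hmem
    exact absurd (hmle _ hmem (by omega)) (by omega))
  -- the set of left elements and the count F + 1 = n + g
  have hLsub : {s | s ∈ S ∧ s < F} ⊆ Set.Iio F := fun x hx => hx.2
  have hLfin : {s | s ∈ S ∧ s < F}.Finite := (Set.finite_Iio F).subset hLsub
  have hL0 : 0 ∈ {s | s ∈ S ∧ s < F} := ⟨h0, by omega⟩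
  have hn1 : 1 ≤ leftEls S := by
    have : ({0} : Set ℕ).ncard ≤ {s | s ∈ S ∧ s < F}.ncard :=
      Set.ncard_le_ncard (by simpa using hL0) hLfin
    simpa [leftEls] using this
  have hpart : Set.Iic F = {s | s ∈ S ∧ s < F} ∪ Sᶜ := by
    ext x
    constructor
    · intro hx
      by_cases hxS : x ∈ S
      · exact Or.inl ⟨hxS, lt_of_le_of_ne hx (by rintro rfl; exact hFgap hxS)⟩
      · exact Or.inr hxS
    · rintro (⟨-, h⟩ | h)
      · exact le_of_lt h
      · exact hle _ h
  have hcount : F + 1 = leftEls S + Sᶜ.ncard := by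
    have hIic : (Set.Iic F).ncard = F + 1 := by
      rw [Set.ncard_eq_toFinset_card']; simp
    have hdisj : Disjoint {s | s ∈ S ∧ s < F} Sᶜ :=
      Set.disjoint_left.mpr (fun x hx hxc => hxc hx.1)
    rw [← hIic, hpart, Set.ncard_union_eq hdisj hLfin hfin]
    rfl
  -- min gens are finite
  have hMGsub : {x | IsMinGen S x} ⊆ Set.Icc 1 (2 * F + 2) := by
    intro x hx
    obtain ⟨hxS, hx0, hxsum⟩ := hx
    refine ⟨by omega, ?_⟩
    by_contra hbig
    push_neg at hbig
    exact hxsum ⟨F + 1, hgt _ (by omega), x - (F + 1), hgt _ (by omega),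
      by omega, by omega, by omega⟩
  have hMGfin : {x | IsMinGen S x}.Finite := (Set.finite_Icc 1 (2 * F + 2)).subset hMGsub
  -- F is a special gap
  have hFSG : F ∈ SG S :=
    ⟨hFgap, hgt _ (by omega), fun s hs hs0 => hgt _ (by omega)⟩
  have hleftEq : leftEls S = {s | s ∈ S ∧ s < F}.ncard := rfl
  have hedimEq : edim S = {x | IsMinGen S x}.ncard := rfl
  by_cases hirr : SG S = {F}
  · -- irreducible case
    -- the symmetry dichotomy
    have dich : ∀ x, x ∉ S → 2 * x ≠ F → F - x ∈ S := by
      intro x hx h2x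
      by_contra hFx
      set D := {z | z ∉ S ∧ F - z ∉ S ∧ 2 * z ≠ F} with hDdef
      have hDfin : D.Finite := hfin.subset (fun z hz => hz.1)
      have hxD : x ∈ D := ⟨hx, hFx, h2x⟩
      set h := sSup D with hhdef
      have hhD : h ∈ D := Nat.sSup_mem ⟨x, hxD⟩ hDfin.bddAbove
      have hhle : ∀ z ∈ D, z ≤ h := fun z hz => le_csSup hDfin.bddAbove hz
      have hhF : h ≤ F := hle _ hhD.1
      have hFhD : F - h ∈ D := by
        refine ⟨hhD.2.1, ?_, fun hq => hhD.2.2 (by omega)⟩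
        rw [show F - (F - h) = h by omega]
        exact hhD.1
      have hFh_le : F - h ≤ h := hhle _ hFhD
      have h2h : F < 2 * h := by
        have := hhD.2.2
        omega
      have hhSG : h ∈ SG S := by
        refine ⟨hhD.1, hgt _ h2h, fun s hs hs0 => ?_⟩
        by_contra hhs
        have hhsle : h + s ≤ F := hle _ hhs
        have hmem : h + s ∈ D := by
          refine ⟨hhs, ?_, by omega⟩
          intro hw
          have hws : (F - (h + s)) + s ∈ S := hadd _ hw _ hs
          rw [show F - (h + s) + s = F - h by omega] at hws
          exact hhD.2.1 hws
        have := hhle _ hmem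
        omega
      have hhFeq : h = F := by
        have : h ∈ ({F} : Set ℕ) := hirr ▸ hhSG
        simpa using this
      apply hhD.2.1
      rw [hhFeq, Nat.sub_self]
      exact h0
    -- e ≥ 2
    have hmmg : IsMinGen S m := by
      refine ⟨hmmem, hm0, ?_⟩
      rintro ⟨u, hu, v, hv, hu0, hv0, hsum⟩
      have := hmle u hu hu0
      have := hmle v hv hv0
      omega
    have hAne : {x | x ∈ S ∧ ¬ m ∣ x}.Nonempty := by
      by_cases hd : m ∣ F + 1
      · refine ⟨F + 2, hgt _ (by omega), fun hd2 => ?_⟩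
        have hdd : m ∣ (F + 2) - (F + 1) := Nat.dvd_sub hd2 hd
        rw [show F + 2 - (F + 1) = 1 by omega] at hdd
        have := Nat.le_of_dvd (by omega) hdd
        omega
      · exact ⟨F + 1, hgt _ (by omega), hd⟩
    set x₀ := sInf {x | x ∈ S ∧ ¬ m ∣ x} with hx₀def
    have hx₀ : x₀ ∈ S ∧ ¬ m ∣ x₀ := Nat.sInf_mem hAne
    have hx₀le : ∀ z, z ∈ S → ¬ m ∣ z → x₀ ≤ z := fun z h1 h2 => Nat.sInf_le ⟨h1, h2⟩
    have hx₀mg : IsMinGen S x₀ := by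
      refine ⟨hx₀.1, fun h => hx₀.2 (h ▸ dvd_zero m), ?_⟩
      rintro ⟨u, hu, v, hv, hu0, hv0, hsum⟩
      by_cases hdu : m ∣ u
      · have hdv : ¬ m ∣ v := fun hdv => hx₀.2 (hsum ▸ dvd_add hdu hdv)
        have := hx₀le v hv hdv
        omega
      · have := hx₀le u hu hdu
        omega
    have hmx₀ : m ≠ x₀ := fun h => hx₀.2 (h ▸ dvd_refl m)
    have he2 : 2 ≤ edim S := by
      have hsub : ({m, x₀} : Set ℕ) ⊆ {x | IsMinGen S x} := by
        rintro z (rfl | rfl)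
        · exact hmmg
        · exact hx₀mg
      have := Set.ncard_le_ncard hsub hMGfin
      rw [Set.ncard_pair hmx₀] at this
      omega
    by_cases hFt : ∃ t, t ∉ S ∧ 2 * t = F
    · obtain ⟨t, htS, htF⟩ := hFt
      -- g ≤ n + 1
      have hA : (Sᶜ \ {t}).ncard ≤ leftEls S := by
        rw [hleftEq]
        apply Set.ncard_le_ncard_of_injOn (fun x => F - x) ?_ ?_ hLfin
        · rintro x ⟨hx, hxt⟩
          have hx1 : x ≠ 0 := fun h => hx (h ▸ h0)
          have hxF : x ≤ F := hle _ hx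
          have h2x : 2 * x ≠ F := fun h => hxt (by simp only [Set.mem_singleton_iff]; omega)
          exact ⟨dich x hx h2x, show F - x < F by omega⟩
        · rintro x ⟨hx, -⟩ y ⟨hy, -⟩ hxy
          have := hle _ hx
          have := hle _ hy
          simp only at hxy
          omega
      have hg : Sᶜ.ncard ≤ leftEls S + 1 := by
        have hsub : Sᶜ ⊆ insert t (Sᶜ \ {t}) := by
          intro z hz
          rcases eq_or_ne z t with rfl | hzt
          · exact Set.mem_insert _ _
          · exact Set.mem_insert_of_mem _ ⟨hz, hzt⟩
        have h1 := Set.ncard_le_ncard hsub ((hfin.diff).insert t)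
        have h2 := Set.ncard_insert_le t (Sᶜ \ {t})
        omega
      rcases Nat.lt_or_ge (edim S) 3 with he3 | he3
      · -- edim S = 2 : derive a contradiction
        exfalso
        have he' : {x | IsMinGen S x}.ncard = 2 := by
          rw [← hedimEq]; omega
        obtain ⟨a, b, hab, hset⟩ := Set.ncard_eq_two.mp he'
        have haMG : IsMinGen S a := by
          have : a ∈ {x | IsMinGen S x} := by rw [hset]; exact Or.inl rfl
          exact this
        have hbMG : IsMinGen S b := by
          have : b ∈ {x | IsMinGen S x} := by rw [hset]; exact Or.inr rfl
          exact this
        have haS : a ∈ S := haMG.1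
        have hbS : b ∈ S := hbMG.1
        have ha0 : a ≠ 0 := haMG.2.1
        have hb0 : b ≠ 0 := hbMG.2.1
        have hgen := wilf_gen_two S a b hset
        have hmul : ∀ k x, x ∈ S → k * x ∈ S := by
          intro k x hx
          induction k with
          | zero => simpa using h0
          | succ n ih => rw [Nat.succ_mul]; exact hadd _ ih _ hx
        have hcombS : ∀ α β, α * a + β * b ∈ S := fun α β =>
          hadd _ (hmul α a haS) _ (hmul β b hbS)
        have hdvd_gcd : ∀ x ∈ S, Nat.gcd a b ∣ x := by
          intro x hx
          obtain ⟨α, β, hrep⟩ := hgen x hx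
          rw [hrep]
          exact dvd_add (Dvd.dvd.mul_left (Nat.gcd_dvd_left a b) α)
            (Dvd.dvd.mul_left (Nat.gcd_dvd_right a b) β)
        have hco : Nat.Coprime a b := by
          have h1 := hdvd_gcd (F + 1) (hgt _ (by omega))
          have h2 := hdvd_gcd (F + 2) (hgt _ (by omega))
          have h3 : Nat.gcd a b ∣ (F + 2) - (F + 1) := Nat.dvd_sub h2 h1
          rw [show F + 2 - (F + 1) = 1 by omega] at h3
          exact Nat.dvd_one.mp h3
        -- key computation : pseudo-Frobenius elements z give z + a + b = a * b
        have key : ∀ z, z ∉ S → z + a ∈ S → z + b ∈ S → z + a + b = a * b := by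
          intro z hz hza hzb
          obtain ⟨α, β, hαβ⟩ := hgen (z + a) hza
          have hα0 : α = 0 := by
            by_contra hα
            obtain ⟨α', rfl⟩ : ∃ α', α = α' + 1 := ⟨α - 1, by omega⟩
            have hring : (α' + 1) * a + β * b = α' * a + β * b + a := by ring
            have hz' : z = α' * a + β * b := by linarith [hαβ, hring]
            exact hz (hz' ▸ hcombS α' β)
          rw [hα0, zero_mul, zero_add] at hαβ
          have hβ1 : 1 ≤ β := by
            rcases Nat.eq_zero_or_pos β with rfl | hβ
            · simp at hαβ; omega
            · exact hβ
          have hβa : β < a := by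
            by_contra hβa
            push_neg at hβa
            obtain ⟨b', rfl⟩ : ∃ b', b = b' + 1 := ⟨b - 1, by omega⟩
            obtain ⟨d, rfl⟩ : ∃ d, β = d + a := ⟨β - a, by omega⟩
            have hexp : (d + a) * (b' + 1) = b' * a + d * (b' + 1) + a := by ring
            have hz' : z = b' * a + d * (b' + 1) := by linarith [hαβ, hexp]
            exact hz (hz' ▸ hcombS b' d)
          obtain ⟨γ, δ, hγδ⟩ := hgen (z + b) hzb
          have hδ0 : δ = 0 := by
            by_contra hδ
            obtain ⟨δ', rfl⟩ : ∃ δ', δ = δ' + 1 := ⟨δ - 1, by omega⟩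
            have hring : γ * a + (δ' + 1) * b = γ * a + δ' * b + b := by ring
            have hz' : z = γ * a + δ' * b := by linarith [hγδ, hring]
            exact hz (hz' ▸ hcombS γ δ')
          rw [hδ0, zero_mul, add_zero] at hγδ
          have hlin : (β + 1) * b = (γ + 1) * a := by
            have h1 : (β + 1) * b = β * b + b := by ring
            have h2 : (γ + 1) * a = γ * a + a := by ring
            linarith [hαβ, hγδ]
          have hdvd : a ∣ β + 1 :=
            hco.dvd_of_dvd_mul_right (hlin ▸ dvd_mul_left a (γ + 1))
          have hβa1 : β + 1 = a :=
            Nat.le_antisymm (by omega) (Nat.le_of_dvd (by omega) hdvd)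
          have hfin' : z + a + b = (β + 1) * b := by
            have h1 : (β + 1) * b = β * b + b := by ring
            linarith [hαβ]
          rw [hfin', hβa1]
        -- t is pseudo-Frobenius
        have htPF : ∀ s, s ∈ S → s ≠ 0 → t + s ∈ S := by
          intro s hs hs0
          by_contra hts
          have htsF : t + s ≤ F := hle _ hts
          have hne2 : t + s ≠ F := by
            intro h
            have : t = s := by omega
            exact htS (this ▸ hs)
          have h2ts : 2 * (t + s) ≠ F := by omega
          have hw := dich (t + s) hts h2ts
          have hws : (F - (t + s)) + s ∈ S := hadd _ hw _ hs
          rw [show F - (t + s) + s = t by omega] at hws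
          exact htS hws
        have ht' : t + a + b = a * b := key t htS (htPF a haS ha0) (htPF b hbS hb0)
        have hF' : F + a + b = a * b := key F hFgap (hgt _ (by omega)) (hgt _ (by omega))
        have : t = F := by linarith [ht', hF']
        omega
      · -- e ≥ 3
        have h3 : 3 * leftEls S ≤ edim S * leftEls S := Nat.mul_le_mul_right _ he3
        linarith [hcount, hg, hn1, h3]
    · -- no exceptional gap: g ≤ n
      push_neg at hFt
      have hg : Sᶜ.ncard ≤ leftEls S := by
        rw [hleftEq]
        apply Set.ncard_le_ncard_of_injOn (fun x => F - x) ?_ ?_ hLfin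
        · intro x hx
          have hx1 : x ≠ 0 := fun h => hx (h ▸ h0)
          have hxF : x ≤ F := hle _ hx
          exact ⟨dich x hx (hFt x hx), show F - x < F by omega⟩
        · intro x hx y hy hxy
          have := hle _ hx
          have := hle _ hy
          simp only at hxy
          omega
      have h2 : 2 * leftEls S ≤ edim S * leftEls S := Nat.mul_le_mul_right _ he2
      linarith [hcount, hg, hn1, h2]
  · -- non-irreducible: shape case
    have hex : ∃ h ∈ SG S, h ≠ F := by
      by_contra hno
      push_neg at hno
      exact hirr (Set.eq_singleton_iff_unique_mem.mpr ⟨hFSG, hno⟩)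
    obtain ⟨h, hhSG, hhF⟩ := hex
    have hhm : h < m := hsp h hhSG hhF
    have hhgap : h ∉ S := hhSG.1
    have hh0 : h ≠ 0 := fun hh => hhgap (hh ▸ h0)
    have hhleF : h ≤ F := hle h hhgap
    -- shape lemma : every gap is F or < m
    have hshape : ∀ x, x ∉ S → x = F ∨ x < m := by
      intro x hx
      by_contra hcon
      push_neg at hcon
      obtain ⟨hxF, hxm⟩ := hcon
      set E := {z | z ∉ S ∧ z ≠ F} with hEdef
      have hEfin : E.Finite := hfin.subset (fun z hz => hz.1)
      have hEne : E.Nonempty := ⟨x, hx, hxF⟩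
      set f := sSup E with hfdef
      have hfE : f ∈ E := Nat.sSup_mem hEne hEfin.bddAbove
      have hfle : ∀ z ∈ E, z ≤ f := fun z hz => le_csSup hEfin.bddAbove hz
      have hfm : m ≤ f := le_trans hxm (hfle x ⟨hx, hxF⟩)
      have hfF : f ≤ F := hle f hfE.1
      have hfF' : f < F := lt_of_le_of_ne hfF hfE.2
      have hFh : F - h ∈ E := by
        constructor
        · intro hmem
          have : h + (F - h) ∈ S := hhSG.2.2 (F - h) hmem (by omega)
          rw [show h + (F - h) = F by omega] at this
          exact hFgap this
        · omega
      have hcle : F - f ≤ h := by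
        have := hfle _ hFh
        omega
      have hcS : F - f ∉ S := by
        intro hcmem
        have := hmle _ hcmem (by omega)
        omega
      have h2f : 2 * f ∈ S := by
        by_contra h2
        rcases eq_or_ne (2 * f) F with heq | hne2
        · -- then F - f = f, so f ≤ h < m ≤ f
          omega
        · have : 2 * f ∈ E := ⟨h2, hne2⟩
          have := hfle _ this
          omega
      have hfSG : f ∈ SG S := by
        refine ⟨hfE.1, h2f, fun s hs hs0 => ?_⟩
        by_contra hfs
        rcases eq_or_ne (f + s) F with heq | hne2
        · have : s = F - f := by omega
          exact hcS (this ▸ hs)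
        · have : f + s ∈ E := ⟨hfs, hne2⟩
          have := hfle _ this
          omega
      have := hsp f hfSG (by omega)
      omega
    -- characterization of S
    have hchar : ∀ x, x ∈ S ↔ (x = 0 ∨ (m ≤ x ∧ x ≠ F)) := by
      intro x
      constructor
      · intro hx
        rcases eq_or_ne x 0 with rfl | hx0
        · exact Or.inl rfl
        · exact Or.inr ⟨hmle x hx hx0, fun h => hFgap (h ▸ hx)⟩
      · rintro (rfl | ⟨hmx, hxF⟩)
        · exact h0
        · by_contra hx
          rcases hshape x hx with h | h <;> omega
    -- case split on F
    rcases Nat.lt_or_ge F m with hFlt | hFge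
    · -- F = m - 1 : ordinary case
      have hFeq : F = m - 1 := by omega
      have hL : {s | s ∈ S ∧ s < F} = {0} := by
        ext x
        simp only [Set.mem_setOf_eq, Set.mem_singleton_iff]
        constructor
        · rintro ⟨hx, hxF⟩
          rcases (hchar x).mp hx with h | h <;> omega
        · rintro rfl
          exact ⟨h0, by omega⟩
      have hn : leftEls S = 1 := by
        show {s | s ∈ S ∧ s < F}.ncard = 1
        rw [hL]; simp
      have hesub : Set.Ico m (2 * m) ⊆ {x | IsMinGen S x} := by
        intro x hx
        simp only [Set.mem_Ico] at hx
        refine ⟨(hchar x).mpr (Or.inr ⟨hx.1, by omega⟩), by omega, ?_⟩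
        rintro ⟨u, hu, v, hv, hu0, hv0, rfl⟩
        have := hmle u hu hu0
        have := hmle v hv hv0
        omega
      have he : m ≤ edim S := by
        have := Set.ncard_le_ncard hesub hMGfin
        rw [wilf_ncard_Ico] at this
        show m ≤ {x | IsMinGen S x}.ncard
        omega
      have : edim S * leftEls S = edim S := by rw [hn]; ring
      omega
    · -- F ≥ m + 1 (F ≠ m)
      have hFge1 : m + 1 ≤ F := by omega
      have hL : {s | s ∈ S ∧ s < F} = insert 0 (Set.Ico m F) := by
        ext x
        simp only [Set.mem_setOf_eq, Set.mem_insert_iff, Set.mem_Ico]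
        constructor
        · rintro ⟨hx, hxF⟩
          rcases (hchar x).mp hx with h | h
          · exact Or.inl h
          · exact Or.inr ⟨h.1, hxF⟩
        · rintro (rfl | ⟨h1, h2⟩)
          · exact ⟨h0, by omega⟩
          · exact ⟨(hchar x).mpr (Or.inr ⟨h1, by omega⟩), h2⟩
      have hn : leftEls S = F - m + 1 := by
        show {s | s ∈ S ∧ s < F}.ncard = F - m + 1
        rw [hL, Set.ncard_insert_of_notMem (by simp; omega) (Set.finite_Ico m F),
          wilf_ncard_Ico]
      -- minimal generator facts
      have hmgIco : ∀ x ∈ Set.Ico m (2 * m), x ≠ F → IsMinGen S x := by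
        intro x hx hxF
        simp only [Set.mem_Ico] at hx
        refine ⟨(hchar x).mpr (Or.inr ⟨hx.1, hxF⟩), by omega, ?_⟩
        rintro ⟨u, hu, v, hv, hu0, hv0, rfl⟩
        have := hmle u hu hu0
        have := hmle v hv hv0
        omega
      rcases Nat.lt_or_ge F (2 * m) with hF2m | hF2m
      · -- m + 1 ≤ F ≤ 2m - 1
        rcases eq_or_ne F (m + 1) with hFeq | hFne
        · -- F = m + 1 : extra generator 2m+1
          have hextra : IsMinGen S (2 * m + 1) := by
            refine ⟨(hchar _).mpr (Or.inr ⟨by omega, by omega⟩), by omega, ?_⟩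
            rintro ⟨u, hu, v, hv, hu0, hv0, hsum⟩
            have hum := hmle u hu hu0
            have hvm := hmle v hv hv0
            rcases (hchar u).mp hu with h | h
            · omega
            · rcases (hchar v).mp hv with h' | h' <;> omega
          have hesub : insert (2 * m + 1) (Set.Ico m (2 * m) \ {F}) ⊆
              {x | IsMinGen S x} := by
            rintro x (rfl | ⟨hx1, hx2⟩)
            · exact hextra
            · exact hmgIco x hx1 (by simpa using hx2)
          have hcard : (insert (2 * m + 1) (Set.Ico m (2 * m) \ {F})).ncard = m := by
            rw [Set.ncard_insert_of_notMem (by simp) 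
              (((Set.finite_Ico m (2 * m))).diff),
              Set.ncard_diff_singleton_of_mem (show F ∈ Set.Ico m (2 * m) by simp; omega),
              wilf_ncard_Ico]
            omega
          have he : m ≤ edim S := by
            have := Set.ncard_le_ncard hesub hMGfin
            rw [hcard] at this
            exact this
          have hngoal : leftEls S = 2 := by omega
          calc edim S * leftEls S ≥ m * 2 := by
                rw [hngoal]; exact Nat.mul_le_mul_right 2 he
            _ ≥ F + 1 := by omega
        · -- m + 2 ≤ F ≤ 2m - 1 : so m ≥ 3
          have hm3 : 3 ≤ m := by omega
          have hesub : Set.Ico m (2 * m) \ {F} ⊆ {x | IsMinGen S x} := by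
            rintro x ⟨hx1, hx2⟩
            exact hmgIco x hx1 (by simpa using hx2)
          have hcard : (Set.Ico m (2 * m) \ {F}).ncard = m - 1 := by
            rw [Set.ncard_diff_singleton_of_mem (show F ∈ Set.Ico m (2 * m) by simp; omega),
              wilf_ncard_Ico]
            omega
          have he : m - 1 ≤ edim S := by
            have := Set.ncard_le_ncard hesub hMGfin
            rw [hcard] at this
            exact this
          -- k := F - m, 2 ≤ k ≤ m - 1, goal (m-1)*(k+1) ≥ m+k+1
          have hkey : (m - 1) * (F - m + 1) ≥ F + 1 := by
            have h3 : 1 * (F - m) ≤ (m - 2) * (F - m) :=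
              Nat.mul_le_mul_right _ (by omega)
            have hexp : (m - 1) * (F - m + 1) = (m - 2) * (F - m) + (F - m) + (m - 1) := by
              zify [show 1 ≤ m by omega, show 2 ≤ m by omega, show m ≤ F by omega]
              ring
            omega
          calc edim S * leftEls S ≥ (m - 1) * (F - m + 1) := by
                rw [hn]; exact Nat.mul_le_mul_right _ he
            _ ≥ F + 1 := hkey
      · -- F ≥ 2m
        have hesub : Set.Ico m (2 * m) ⊆ {x | IsMinGen S x} := by
          intro x hx
          have := (Set.mem_Ico.mp hx).2
          exact hmgIco x hx (by omega)
        have he : m ≤ edim S := by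
          have := Set.ncard_le_ncard hesub hMGfin
          rw [wilf_ncard_Ico] at this
          show m ≤ {x | IsMinGen S x}.ncard
          omega
        have hkey : m * (F - m + 1) ≥ F + 1 := by
          have h3 : 2 * (F - m) ≤ m * (F - m) := Nat.mul_le_mul_right _ hm2
          have hexp : m * (F - m + 1) = m * (F - m) + m := by ring
          omega
        calc edim S * leftEls S ≥ m * (F - m + 1) := by
              rw [hn]; exact Nat.mul_le_mul_right _ he
          _ ≥ F + 1 := hkey
end

section
/- Let S be a numerical semigroup that is not irreducible. Then the maximum of the set of special gaps of S different from F(S) equals the maximum of the set {x ∉ S : F(S) - x ∉ S and 2x ≠ F(S)}, and this common maximum is strictly greater than F(S)/2. -/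
open Set

theorem max_special_gap_eq (S : Set ℕ) (hS : IsNumSgp S) (hne : S ≠ Set.univ)
    (hirr : ¬ IsIrred S) :
    sSup (SG S \ {frob S}) = sSup {x | x ∉ S ∧ frob S - x ∉ S ∧ 2 * x ≠ frob S} ∧
    2 * sSup (SG S \ {frob S}) > frob S := by
  obtain ⟨h0, hadd, hfin⟩ := hS
  set F := frob S with hF
  have hcne : Sᶜ.Nonempty := Set.nonempty_compl.mpr hne
  have hFmem : F ∉ S := hcne.csSup_mem hfin
  have hgap_le : ∀ x, x ∉ S → x ≤ F := fun x hx => le_csSup hfin.bddAbove hx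
  have hgt : ∀ n, F < n → n ∈ S := by
    intro n hn
    by_contra hns
    exact absurd (hgap_le n hns) (not_le.mpr hn)
  have hF0 : F ≠ 0 := fun h => hFmem (h ▸ h0)
  have hFSG : F ∈ SG S := by
    refine ⟨hFmem, hgt _ (by omega), fun s hs hs0 => hgt _ (by omega)⟩
  -- A nonempty
  have hAne : (SG S \ {F}).Nonempty := by
    by_contra h
    apply hirr
    rw [Set.not_nonempty_iff_eq_empty, Set.diff_eq_empty] at h
    exact Set.Subset.antisymm h (by simpa using hFSG)
  -- A ⊆ B
  set B := {x | x ∉ S ∧ F - x ∉ S ∧ 2 * x ≠ F} with hB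
  have hAB : SG S \ {F} ⊆ B := by
    rintro h ⟨⟨hhS, h2h, hclosed⟩, hhF⟩
    have hle : h ≤ F := hgap_le h hhS
    refine ⟨hhS, ?_, fun h2F => hFmem (h2F ▸ h2h)⟩
    intro hFh
    rcases Nat.eq_zero_or_pos (F - h) with h0' | hpos
    · exact hhF (by simp only [Set.mem_singleton_iff]; omega)
    · have := hclosed (F - h) hFh (by omega)
      have heq : h + (F - h) = F := by omega
      exact hFmem (heq ▸ this)
  have hBsub : B ⊆ Sᶜ := fun x hx => hx.1
  have hBfin : B.Finite := hfin.subset hBsub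
  have hBne : B.Nonempty := hAne.mono hAB
  have hBbdd : BddAbove B := hBfin.bddAbove
  set m := sSup B with hm
  have hmB : m ∈ B := hBne.csSup_mem hBfin
  obtain ⟨hmS, hFmS, h2mF⟩ := hmB
  have hmle : m ≤ F := hgap_le m hmS
  -- 2m > F
  have h2m : F < 2 * m := by
    by_contra hcon
    have h2m' : 2 * m < F := by omega
    have hx : F - m ∈ B := by
      refine ⟨hFmS, ?_, by omega⟩
      have : F - (F - m) = m := by omega
      rw [this]; exact hmS
    have := le_csSup hBbdd hx
    omega
  -- m ∈ SG S
  have hmSG : m ∈ SG S := by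
    refine ⟨hmS, hgt _ h2m, fun s hs hs0 => ?_⟩
    by_contra hms
    have hmsle : m + s ≤ F := hgap_le _ hms
    have hx : m + s ∈ B := by
      refine ⟨hms, ?_, by omega⟩
      intro hy
      have hy' := hadd _ hy _ hs
      have heq : F - (m + s) + s = F - m := by omega
      exact hFmS (heq ▸ hy')
    have := le_csSup hBbdd hx
    omega
  have hmF : m ≠ F := by
    intro h
    apply hFmS
    have : F - m = 0 := by omega
    rw [this]; exact h0
  have hmA : m ∈ SG S \ {F} := ⟨hmSG, hmF⟩
  have hAbdd : BddAbove (SG S \ {F}) :=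
    (hfin.subset (fun x hx => hx.1.1)).bddAbove
  have heq : sSup (SG S \ {F}) = m := by
    refine le_antisymm ?_ (le_csSup hAbdd hmA)
    exact csSup_le hAne (fun a ha => le_csSup hBbdd (hAB ha))
  rw [heq]
  exact ⟨rfl, h2m⟩
end

section
/- Let S be a non-special numerical semigroup, h = max(SG(S) \ {F(S)}) its largest special gap different from the Frobenius number, and T = (S ∪ {h}) \ {m(S)}. Then T is a numerical semigroup with F(T) = F(S), g(T) = g(S), and n(T) = n(S). -/
open Set

theorem Atrans_invariants (S : Set ℕ) (hS : IsNumSgp S) (hsp : ¬ IsSpecial S) :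
    IsNumSgp (Atrans S) ∧ frob (Atrans S) = frob S ∧ genus (Atrans S) = genus S ∧
      leftEls (Atrans S) = leftEls S := by
  obtain ⟨h0S, hadd, hfin⟩ := hS
  rw [IsSpecial] at hsp
  push_neg at hsp
  obtain ⟨h, hhSG, hhF, hhm⟩ := hsp
  set m := mult S with hm_def
  set f := frob S with hf_def
  set h0 := sSup (SG S \ {f}) with hh0_def
  -- S is infinite
  have hSinf : S.Infinite := by
    have := hfin.infinite_compl
    rwa [compl_compl] at this
  have hS0ne : (S \ {0}).Nonempty := by
    obtain ⟨x, hx, hx0⟩ := hSinf.exists_gt 0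
    exact ⟨x, hx, by simpa using hx0.ne'⟩
  have hmm : m ∈ S \ {0} := Nat.sInf_mem hS0ne
  have hmmem : m ∈ S ∧ m ≠ 0 := ⟨hmm.1, by simpa using hmm.2⟩
  -- h0 is the max of SG S \ {f}
  have Hne : (SG S \ {f}).Nonempty := ⟨h, hhSG, hhF⟩
  have Hfin : (SG S \ {f}).Finite := by
    apply hfin.subset
    intro x hx
    exact hx.1.1
  have h0mem : h0 ∈ SG S \ {f} := Nat.sSup_mem Hne Hfin.bddAbove
  have h0SG : h0 ∈ SG S := h0mem.1
  have h0F : h0 ≠ f := by simpa using h0mem.2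
  have h0nS : h0 ∉ S := h0SG.1
  have hle : h ≤ h0 := le_csSup Hfin.bddAbove ⟨hhSG, hhF⟩
  have hmh : m ≤ h := hhm
  have hmh0 : m < h0 := lt_of_le_of_ne (hmh.trans hle) (fun e => h0nS (e ▸ hmmem.1))
  have Scne : Sᶜ.Nonempty := ⟨h0, h0nS⟩
  have hfmem : f ∉ S := Nat.sSup_mem Scne hfin.bddAbove
  have h0f : h0 < f := lt_of_le_of_ne (le_csSup hfin.bddAbove h0nS) h0F
  have hmf : m < f := hmh0.trans h0f
  -- description of the complement of T
  have Tcompl : (Atrans S)ᶜ = insert m (Sᶜ \ {h0}) := by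
    ext x
    simp only [Atrans, ← hh0_def, ← hf_def, ← hm_def, mem_compl_iff, mem_diff,
      mem_union, mem_singleton_iff, mem_insert_iff]
    by_cases hx : x = m
    · simp [hx]
    · by_cases hx0 : x = h0 <;> simp [hx, hx0, h0nS]
  have TcomplFin : (Atrans S)ᶜ.Finite := by
    rw [Tcompl]
    exact ((hfin.subset diff_subset).insert m)
  -- T is a numerical semigroup
  have hTsgp : IsNumSgp (Atrans S) := by
    refine ⟨⟨Or.inl h0S, by simpa using (Ne.symm hmmem.2)⟩, ?_, TcomplFin⟩
    rintro a ⟨ha, ham⟩ b ⟨hb, hbm⟩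
    simp only [mem_singleton_iff] at ham hbm
    constructor
    · -- a + b ∈ S ∪ {h0}
      have key : ∀ s ∈ S, s ≠ 0 → h0 + s ∈ S := h0SG.2.2
      rcases ha with ha | ha <;> rcases hb with hb | hb
      · exact Or.inl (hadd a ha b hb)
      · rw [mem_singleton_iff] at hb
        subst hb
        rcases eq_or_ne a 0 with rfl | ha0
        · simp
        · exact Or.inl (by rw [add_comm]; exact key a ha ha0)
      · rw [mem_singleton_iff] at ha
        subst ha
        rcases eq_or_ne b 0 with rfl | hb0
        · simp
        · exact Or.inl (key b hb hb0)
      · rw [mem_singleton_iff] at ha hb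
        subst ha; subst hb
        exact Or.inl (by rw [← two_mul]; exact h0SG.2.1)
    · -- a + b ≠ m
      simp only [mem_singleton_iff]
      rcases eq_or_ne a 0 with rfl | ha0
      · simpa using hbm
      rcases eq_or_ne b 0 with rfl | hb0
      · simpa using ham
      -- both nonzero: each is > m or = h0 > m... show a + b > m
      have hma : m < a := by
        rcases ha with ha | ha
        · exact lt_of_le_of_ne (Nat.sInf_le ⟨ha, ha0⟩) (Ne.symm ham)
        · rw [mem_singleton_iff] at ha; exact ha ▸ hmh0
      omega
  refine ⟨hTsgp, ?_, ?_, ?_⟩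
  · -- frob
    have hfT : f ∈ (Atrans S)ᶜ := by
      rw [Tcompl]
      exact Or.inr ⟨hfmem, by simpa using (Ne.symm h0F)⟩
    have hub : ∀ x ∈ (Atrans S)ᶜ, x ≤ f := by
      intro x hx
      rw [Tcompl] at hx
      rcases hx with rfl | ⟨hx, _⟩
      · exact hmf.le
      · exact le_csSup hfin.bddAbove hx
    exact le_antisymm (csSup_le ⟨f, hfT⟩ hub) (le_csSup TcomplFin.bddAbove hfT)
  · -- genus
    rw [genus, genus, Tcompl,
      Set.ncard_insert_of_notMem (by simp [hmmem.1]) (hfin.subset diff_subset),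
      Set.ncard_diff_singleton_add_one (s := Sᶜ) (a := h0) h0nS hfin]
  · -- leftEls
    have hfrob : frob (Atrans S) = f := by
      -- reuse proof above? it's the second component; redo quickly
      have hfT : f ∈ (Atrans S)ᶜ := by
        rw [Tcompl]
        exact Or.inr ⟨hfmem, by simpa using (Ne.symm h0F)⟩
      have hub : ∀ x ∈ (Atrans S)ᶜ, x ≤ f := by
        intro x hx
        rw [Tcompl] at hx
        rcases hx with rfl | ⟨hx, _⟩
        · exact hmf.le
        · exact le_csSup hfin.bddAbove hx
      exact le_antisymm (csSup_le ⟨f, hfT⟩ hub) (le_csSup TcomplFin.bddAbove hfT)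
    have hset : {s ∈ Atrans S | s < frob (Atrans S)}
        = insert h0 ({s ∈ S | s < f} \ {m}) := by
      rw [hfrob]
      ext x
      simp only [Atrans, ← hh0_def, ← hf_def, ← hm_def, mem_setOf_eq, mem_diff,
        mem_union, mem_singleton_iff, mem_insert_iff, mem_sep_iff]
      constructor
      · rintro ⟨⟨hx | hx, hxm⟩, hxf⟩
        · exact Or.inr ⟨⟨hx, hxf⟩, hxm⟩
        · exact Or.inl hx
      · rintro (rfl | ⟨⟨hx, hxf⟩, hxm⟩)
        · exact ⟨⟨Or.inr rfl, (fun e => h0nS (e ▸ hmmem.1))⟩, h0f⟩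
        · exact ⟨⟨Or.inl hx, hxm⟩, hxf⟩
    have hLSfin : {s ∈ S | s < f}.Finite :=
      (Set.finite_Iio f).subset (fun x hx => hx.2)
    rw [leftEls, leftEls, hset, ← hf_def,
      Set.ncard_insert_of_notMem (fun hc => h0nS hc.1.1) (hLSfin.subset diff_subset),
      Set.ncard_diff_singleton_add_one (s := {s ∈ S | s < f}) (a := m) ⟨hmmem.1, hmf⟩ hLSfin]
end

section
/- Let S be a non-special numerical semigroup and T = A(S) = (S ∪ {h}) \ {m(S)} where h = max(SG(S) \ {F(S)}). Then T is neither irreducible nor ordinary. -/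
open Set

theorem Atrans_not_irred_not_ordinary (S : Set ℕ) (hS : IsNumSgp S) (hsp : ¬ IsSpecial S) :
    ¬ IsIrred (Atrans S) ∧ ¬ IsOrdinary (Atrans S) := by
  obtain ⟨h0S, hadd, hfin⟩ := hS
  rw [IsSpecial] at hsp; push_neg at hsp
  obtain ⟨g, hgSG, hgF, hgm⟩ := hsp
  have hSGfin : (SG S \ {frob S}).Finite := hfin.subset (fun x hx => hx.1.1)
  have hSGne : (SG S \ {frob S}).Nonempty := ⟨g, hgSG, hgF⟩
  have hHmem : sSup (SG S \ {frob S}) ∈ SG S \ {frob S} := hSGne.csSup_mem hSGfin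
  set H := sSup (SG S \ {frob S}) with hHdef
  have hHS : H ∉ S := hHmem.1.1
  have hHF : H ≠ frob S := hHmem.2
  have hgH : g ≤ H := le_csSup hSGfin.bddAbove ⟨hgSG, hgF⟩
  have hSne : (S \ {0}).Nonempty := by
    have hSi : S.Infinite := by
      have := hfin.infinite_compl
      rwa [compl_compl] at this
    exact (hSi.diff (Set.finite_singleton 0)).nonempty
  have hmmem : mult S ∈ S \ {0} := Nat.sInf_mem hSne
  have hmS : mult S ∈ S := hmmem.1
  have hm0 : mult S ≠ 0 := hmmem.2
  have hmH : mult S < H :=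
    lt_of_le_of_ne (le_trans hgm hgH) (fun e => hHS (e ▸ hmS))
  have hScne : Sᶜ.Nonempty := ⟨H, hHS⟩
  have hFc : frob S ∈ Sᶜ := hScne.csSup_mem hfin
  have hFS : frob S ∉ S := hFc
  have hHltF : H < frob S := lt_of_le_of_ne (le_csSup hfin.bddAbove hHS) hHF
  have hTdef : Atrans S = (S ∪ {H}) \ {mult S} := rfl
  have hFT : frob S ∉ Atrans S := by
    rw [hTdef]
    rintro ⟨h1, -⟩
    rcases h1 with h1 | h1
    · exact hFS h1
    · exact hHF (mem_singleton_iff.mp h1).symm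
  have hHT : H ∈ Atrans S := by
    rw [hTdef]
    exact ⟨Or.inr rfl, fun e => (lt_irrefl _ (mem_singleton_iff.mp e ▸ hmH))⟩
  constructor
  · -- not irreducible
    intro hirr
    -- m ∈ SG (Atrans S)
    have hmSG : mult S ∈ SG (Atrans S) := by
      refine ⟨?_, ?_, ?_⟩
      · rw [hTdef]; rintro ⟨-, h2⟩; exact h2 rfl
      · rw [hTdef]
        refine ⟨Or.inl ?_, ?_⟩
        · have : mult S + mult S ∈ S := hadd _ hmS _ hmS
          simpa [two_mul] using this
        · intro e
          have : 2 * mult S = mult S := mem_singleton_iff.mp e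
          omega
      · intro s hs hs0
        rw [hTdef] at hs ⊢
        refine ⟨?_, ?_⟩
        · rcases hs.1 with h1 | h1
          · exact Or.inl (hadd _ hmS _ h1)
          · rw [mem_singleton_iff.mp h1]
            exact Or.inl (by simpa [add_comm] using hHmem.1.2.2 (mult S) hmS hm0)
        · intro e
          have := mem_singleton_iff.mp e
          omega
    have hmeq : mult S = frob (Atrans S) := by
      have := hirr ▸ hmSG
      exact mem_singleton_iff.mp this
    -- but frob (Atrans S) ≥ frob S > mult S
    have hTcfin : (Atrans S)ᶜ.Finite := by
      apply (hfin.union (Set.finite_singleton (mult S))).subset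
      intro x hx
      by_cases hxm : x = mult S
      · exact Or.inr hxm
      · left
        intro hxS
        exact hx ⟨Or.inl hxS, hxm⟩
    have hFle : frob S ≤ frob (Atrans S) := le_csSup hTcfin.bddAbove hFT
    omega
  · rintro ⟨c, hc⟩
    have hH' : H ∈ ({0} : Set ℕ) ∪ {m | c ≤ m} := hc ▸ hHT
    have hcH : c ≤ H := by
      rcases hH' with h1 | h1
      · exact absurd (mem_singleton_iff.mp h1) (by omega)
      · exact h1
    have : frob S ∈ Atrans S := by
      rw [hc]
      exact Or.inr (by simp only [mem_setOf_eq]; omega)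
    exact hFT this
end

section
/- Let S be a non-special numerical semigroup, h = max(SG(S) \ {F(S)}), and T = (S ∪ {h}) \ {m(S)}. Then both 2·m(S) and h are minimal generators of T. -/
open Set

theorem Atrans_min_gens (S : Set ℕ) (hS : IsNumSgp S) (hsp : ¬ IsSpecial S) :
    IsMinGen (Atrans S) (2 * mult S) ∧ IsMinGen (Atrans S) (sSup (SG S \ {frob S})) := by

  obtain ⟨h0S, hadd, hfin⟩ := hS
  -- S \ {0} is nonempty
  have hSinf : S.Infinite := by
    have := hfin.infinite_compl
    rwa [compl_compl] at this
  have hne : (S \ {0}).Nonempty := (hSinf.diff (Set.finite_singleton 0)).nonempty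
  have hm : mult S ∈ S \ {0} := Nat.sInf_mem hne
  have hmle : ∀ a ∈ S, a ≠ 0 → mult S ≤ a := fun a ha h0 => Nat.sInf_le ⟨ha, h0⟩
  -- the set of special gaps other than F is finite and nonempty
  have hsub : SG S \ {frob S} ⊆ Sᶜ := fun x hx => hx.1.1
  have hfinSG : (SG S \ {frob S}).Finite := hfin.subset hsub
  unfold IsSpecial at hsp
  push_neg at hsp
  obtain ⟨h, hhSG, hhF, hhm⟩ := hsp
  have hneSG : (SG S \ {frob S}).Nonempty := ⟨h, hhSG, hhF⟩
  set H := sSup (SG S \ {frob S}) with hHdef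
  have hHmem : H ∈ SG S \ {frob S} := hneSG.csSup_mem hfinSG
  have hHnS : H ∉ S := hHmem.1.1
  have hhH : h ≤ H := le_csSup hfinSG.bddAbove ⟨hhSG, hhF⟩
  have hmH : mult S < H := lt_of_le_of_ne (le_trans hhm hhH)
    (fun e => hHnS (e ▸ hm.1))
  -- every nonzero element of Atrans S is > mult S
  have hkey : ∀ a ∈ Atrans S, a ≠ 0 → mult S < a := by
    rintro a ⟨ha | ha, ham⟩ h0
    · exact lt_of_le_of_ne (hmle a ha h0) (fun e => ham (by simp [e.symm]))
    · simp only [Set.mem_singleton_iff] at ha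
      exact ha ▸ hmH
  have hm0 : mult S ≠ 0 := hm.2
  constructor
  · refine ⟨⟨Or.inl ?_, ?_⟩, ?_, ?_⟩
    · have := hadd (mult S) hm.1 (mult S) hm.1
      rwa [two_mul]
    · simp only [Set.mem_singleton_iff]; omega
    · omega
    · rintro ⟨a, ha, b, hb, ha0, hb0, hab⟩
      have := hkey a ha ha0
      have := hkey b hb hb0
      omega
  · refine ⟨⟨Or.inr rfl, ?_⟩, ?_, ?_⟩
    · simp only [Set.mem_singleton_iff]; omega
    · omega
    · rintro ⟨a, ha, b, hb, ha0, hb0, hab⟩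
      have haS : a ∈ S := by
        rcases ha.1 with h | h
        · exact h
        · simp only [Set.mem_singleton_iff] at h; omega
      have hbS : b ∈ S := by
        rcases hb.1 with h | h
        · exact h
        · simp only [Set.mem_singleton_iff] at h; omega
      exact hHnS (hab ▸ hadd a haS b hbS)
end

section
/- Let S be a non-special numerical semigroup with minimal generators m(S) = n₁ < n₂ < … < n_t, let h = max(SG(S) \ {F(S)}), and let T = (S ∪ {h}) \ {m(S)}. If m(S) + h ≥ n_r for some r ∈ {1, …, t}, then n₂, n₃, …, n_r are minimal generators of T. -/
open Set

theorem Atrans_min_gens_below (S : Set ℕ) (hS : IsNumSgp S) (hsp : ¬ IsSpecial S)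
    (t : ℕ) (n : ℕ → ℕ)
    (hmono : ∀ i j, 1 ≤ i → i < j → j ≤ t → n i < n j)
    (hgens : {x | IsMinGen S x} = n '' (Set.Icc 1 t))
    (hn1 : n 1 = mult S)
    (r : ℕ) (hr1 : 1 ≤ r) (hrt : r ≤ t)
    (hle : n r ≤ mult S + sSup (SG S \ {frob S})) :
    ∀ i, 2 ≤ i → i ≤ r → IsMinGen (Atrans S) (n i) := by

  intro i hi2 hir
  obtain ⟨h0S, hadd, hfin⟩ := hS
  set h := sSup (SG S \ {frob S}) with hh
  have hsubc : SG S \ {frob S} ⊆ Sᶜ := fun x hx => hx.1.1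
  have hfinSG : (SG S \ {frob S}).Finite := hfin.subset hsubc
  rw [IsSpecial] at hsp; push_neg at hsp
  obtain ⟨h0, hh0SG, hh0F, hh0m⟩ := hsp
  have hne : (SG S \ {frob S}).Nonempty := ⟨h0, hh0SG, hh0F⟩
  have hmem : h ∈ SG S \ {frob S} := hne.csSup_mem hfinSG
  have hnotS : h ∉ S := hmem.1.1
  -- multiplicity facts
  have hSinf : S.Infinite := by
    have := hfin.infinite_compl
    rwa [compl_compl] at this
  have hSne : (S \ {0}).Nonempty := (hSinf.diff (Set.finite_singleton 0)).nonempty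
  have hmmem : mult S ∈ S \ {0} := Nat.sInf_mem hSne
  have hmS : mult S ∈ S := hmmem.1
  have hm0 : mult S ≠ 0 := hmmem.2
  have hmle : ∀ b ∈ S, b ≠ 0 → mult S ≤ b := fun b hb hb0 => Nat.sInf_le ⟨hb, hb0⟩
  -- h > mult S
  have hmh : mult S < h := by
    have h1 : mult S ≤ h0 := hh0m
    have h2 : h0 ≤ h := le_csSup hfinSG.bddAbove ⟨hh0SG, hh0F⟩
    have h3 : mult S ≠ h := fun e => hnotS (e ▸ hmS)
    omega
  -- n i is a minimal generator of S
  have hniS : IsMinGen S (n i) := by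
    have : n i ∈ {x | IsMinGen S x} := by
      rw [hgens]; exact ⟨i, ⟨by omega, by omega⟩, rfl⟩
    exact this
  obtain ⟨hniMem, hni0, hniMin⟩ := hniS
  -- n i ≤ mult S + h
  have hnir : n i ≤ n r := by
    rcases eq_or_lt_of_le hir with he | hlt
    · rw [he]
    · exact le_of_lt (hmono i r (by omega) hlt hrt)
  have hnile : n i ≤ mult S + h := le_trans hnir hle
  -- n i ≠ mult S
  have hnim : n i ≠ mult S := by
    have : n 1 < n i := hmono 1 i le_rfl (by omega) (by omega)
    rw [hn1] at this; omega
  unfold Atrans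
  rw [← hh]
  refine ⟨⟨Or.inl hniMem, ?_⟩, hni0, ?_⟩
  · simpa using hnim
  · rintro ⟨a, ⟨haT, ham⟩, b, ⟨hbT, hbm⟩, ha0, hb0, heq⟩
    simp only [Set.mem_union, Set.mem_singleton_iff] at haT hbT ham hbm
    rcases haT with haS | hah
    · rcases hbT with hbS | hbh
      · exact hniMin ⟨a, haS, b, hbS, ha0, hb0, heq⟩
      · -- b = h, a ∈ S, a ≠ mult S
        have : mult S ≤ a := hmle a haS ha0
        omega
    · rcases hbT with hbS | hbh
      · have : mult S ≤ b := hmle b hbS hb0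
        omega
      · omega
end

section
/- Let S be a non-special numerical semigroup and T = (S ∪ {h}) \ {m(S)} with h = max(SG(S) \ {F(S)}). If there exists a gap x of S with F(S) - m(S) + 1 ≤ x < F(S), then e(T) ≥ e(S), where e denotes the embedding dimension (number of minimal generators). -/
open Set

theorem Atrans_edim_increases (S : Set ℕ) (hS : IsNumSgp S) (hsp : ¬ IsSpecial S)
    (hx : ∃ x : ℕ, x ∉ S ∧ frob S - mult S + 1 ≤ x ∧ x < frob S) :
    edim (Atrans S) ≥ edim S := by
  obtain ⟨hS0, hSadd, hSfin⟩ := hS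
  unfold IsSpecial at hsp
  push_neg at hsp
  obtain ⟨h', h'SG, h'F, h'm⟩ := hsp
  set F := frob S with hF
  set m := mult S with hm
  -- gaps are bounded by F
  have gap_le : ∀ n, n ∉ S → n ≤ F := by
    intro n hn
    rw [hF]
    exact le_csSup hSfin.bddAbove (Set.mem_compl hn)
  have mem_of_gt : ∀ n, F < n → n ∈ S := by
    intro n hn
    by_contra hc
    exact absurd (gap_le n hc) (not_le.2 hn)
  -- multiplicity facts
  have hSne : (S \ {0}).Nonempty := ⟨F + 1, mem_of_gt _ (Nat.lt_succ_self F), by simp⟩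
  have hmmem : m ∈ S \ {0} := by rw [hm]; exact Nat.sInf_mem hSne
  have hmS : m ∈ S := hmmem.1
  have hm0 : m ≠ 0 := by simpa using hmmem.2
  have hmle : ∀ s ∈ S, s ≠ 0 → m ≤ s := by
    intro s hs hs0
    rw [hm]
    exact Nat.sInf_le ⟨hs, hs0⟩
  -- h := max special gap other than F
  set h := sSup (SG S \ {F}) with hh
  have hSGfin : (SG S \ {F}).Finite := hSfin.subset (fun z hz => Set.mem_compl hz.1.1)
  have hSGne : (SG S \ {F}).Nonempty := ⟨h', h'SG, h'F⟩
  have hhmem : h ∈ SG S \ {F} := by rw [hh]; exact hSGne.csSup_mem hSGfin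
  have hle_h : ∀ g ∈ SG S \ {F}, g ≤ h := by
    intro g hg
    rw [hh]
    exact le_csSup hSGfin.bddAbove hg
  have hhS : h ∉ S := hhmem.1.1
  have hm_lt_h : m < h := by
    have h1 : m ≤ h' := h'm
    have h2 : h' ≠ m := fun he => h'SG.1 (he ▸ hmS)
    have h3 : h' ≤ h := hle_h h' ⟨h'SG, h'F⟩
    omega
  have hh_lt_F : h < F := lt_of_le_of_ne (gap_le h hhS) hhmem.2
  -- the key auxiliary: any gap c ≠ F with F < c + m is ≤ some special gap ≠ F
  have keyG : ∀ c, c ∉ S → c ≠ F → F < c + m → c ≤ h := by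
    intro c hcS hcF hclt
    set G := sSup (Sᶜ \ {F}) with hG
    have hGfin : (Sᶜ \ {F}).Finite := hSfin.subset (fun z hz => hz.1)
    have hGne : (Sᶜ \ {F}).Nonempty := ⟨c, Set.mem_compl hcS, hcF⟩
    have hGmem : G ∈ Sᶜ \ {F} := by rw [hG]; exact hGne.csSup_mem hGfin
    have hGS : G ∉ S := hGmem.1
    have hGF : G ≠ F := hGmem.2
    have hcG : c ≤ G := le_csSup hGfin.bddAbove ⟨Set.mem_compl hcS, hcF⟩
    have hhG : h ≤ G := le_csSup hGfin.bddAbove ⟨Set.mem_compl hhS, hhmem.2⟩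
    have h2G : 2 * G ∈ S := by
      by_contra hc2
      have := gap_le (2 * G) hc2
      omega
    have hGSG : G ∈ SG S := by
      refine ⟨hGS, h2G, ?_⟩
      intro s hs hs0
      have := hmle s hs hs0
      exact mem_of_gt _ (by omega)
    calc c ≤ G := hcG
      _ ≤ h := hle_h G ⟨hGSG, hGF⟩
  -- h is large: F < h + m
  obtain ⟨x₀, hx0S, hx0ge, hx0lt⟩ := hx
  have hFhm : F < h + m := by
    have h1 : F < x₀ + m := by omega
    have h2 : x₀ ≤ h := keyG x₀ hx0S (by omega) h1
    omega
  -- membership in T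
  have hTmem : ∀ y, y ∈ Atrans S ↔ (y ∈ S ∨ y = h) ∧ y ≠ m := by
    intro y
    rw [Atrans, ← hF, ← hm, ← hh]
    simp only [Set.mem_diff, Set.mem_union, Set.mem_singleton_iff]
  have hTnz : ∀ y ∈ Atrans S, y ≠ 0 → m + 1 ≤ y := by
    intro y hy hy0
    obtain ⟨hy1, hy2⟩ := (hTmem y).1 hy
    rcases hy1 with hy1 | rfl
    · have := hmle y hy1 hy0
      omega
    · omega
  -- h is a minimal generator of T
  have hBh : IsMinGen (Atrans S) h := by
    refine ⟨(hTmem h).2 ⟨Or.inr rfl, by omega⟩, by omega, ?_⟩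
    rintro ⟨a, haT, b, hbT, ha0, hb0, hab⟩
    have ha1 := hTnz a haT ha0
    have hb1 := hTnz b hbT hb0
    have haS : a ∈ S := by
      rcases ((hTmem a).1 haT).1 with h1 | rfl
      · exact h1
      · omega
    have hbS : b ∈ S := by
      rcases ((hTmem b).1 hbT).1 with h1 | rfl
      · exact h1
      · omega
    exact hhS (hab ▸ hSadd a haS b hbS)
  -- 2m is a minimal generator of T
  have hB2m : IsMinGen (Atrans S) (2 * m) := by
    have h2mS : 2 * m ∈ S := by
      have := hSadd m hmS m hmS
      rwa [two_mul]
    refine ⟨(hTmem (2 * m)).2 ⟨Or.inl h2mS, by omega⟩, by omega, ?_⟩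
    rintro ⟨a, haT, b, hbT, ha0, hb0, hab⟩
    have ha1 := hTnz a haT ha0
    have hb1 := hTnz b hbT hb0
    omega
  -- surviving minimal generators
  have hsurv : ∀ x, IsMinGen S x → x ≠ m → x ≠ F + m → IsMinGen (Atrans S) x := by
    intro x hxmin hxm hxFm
    have hxS : x ∈ S := hxmin.1
    have hx0 : x ≠ 0 := hxmin.2.1
    refine ⟨(hTmem x).2 ⟨Or.inl hxS, hxm⟩, hx0, ?_⟩
    rintro ⟨a, haT, b, hbT, ha0, hb0, hab⟩
    have claim : ∀ c, (c ∈ S ∨ c = h) → c ≠ 0 → c ≠ m → x = h + c → False := by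
      intro c hc hc0 hcm hxe
      have hcm1 : m + 1 ≤ c := by
        rcases hc with hc | rfl
        · have := hmle c hc hc0; omega
        · omega
      have hxgtF : F + 2 ≤ x := by omega
      have hxltFm : x < F + m := by
        by_contra hge
        push_neg at hge
        have hgt : F + m < x := by omega
        have hxmS' : x - m ∈ S := mem_of_gt _ (by omega)
        exact hxmin.2.2 ⟨m, hmS, x - m, hxmS', hm0, by omega, by omega⟩
      have hxmS : x - m ∉ S := by
        intro hmem
        exact hxmin.2.2 ⟨m, hmS, x - m, hmem, hm0, by omega, by omega⟩
      have hle := keyG (x - m) hxmS (by omega) (by omega)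
      omega
    have haor := ((hTmem a).1 haT).1
    have ham := ((hTmem a).1 haT).2
    have hbor := ((hTmem b).1 hbT).1
    have hbm := ((hTmem b).1 hbT).2
    rcases haor with haS | rfl
    · rcases hbor with hbS | rfl
      · exact hxmin.2.2 ⟨a, haS, b, hbS, ha0, hb0, hab⟩
      · exact claim a (Or.inl haS) ha0 ham (by omega)
    · exact claim b hbor hb0 hbm hab
  -- minimal generators of T are bounded, hence finite
  have hBfin : {x | IsMinGen (Atrans S) x}.Finite := by
    apply (Set.finite_Iic (2 * F + 2)).subset
    intro x hxB
    simp only [Set.mem_setOf_eq] at hxB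
    simp only [Set.mem_Iic]
    by_contra hgt
    push_neg at hgt
    have hF1 : F + 1 ∈ Atrans S := (hTmem _).2 ⟨Or.inl (mem_of_gt _ (by omega)), by omega⟩
    have hF2 : x - (F + 1) ∈ Atrans S :=
      (hTmem _).2 ⟨Or.inl (mem_of_gt _ (by omega)), by omega⟩
    exact hxB.2.2 ⟨F + 1, hF1, x - (F + 1), hF2, by omega, by omega, by omega⟩
  -- the injection
  have h2m_not : ¬ IsMinGen S (2 * m) := by
    intro hc
    exact hc.2.2 ⟨m, hmS, m, hmS, hm0, hm0, (two_mul m)⟩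
  simp only [edim, ge_iff_le]
  refine Set.ncard_le_ncard_of_injOn
    (fun x => if x = m then h else if x = F + m then 2 * m else x) ?_ ?_ hBfin
  · intro x hxA
    simp only [Set.mem_setOf_eq] at hxA ⊢
    by_cases h1 : x = m
    · rw [if_pos h1]; exact hBh
    · by_cases h2 : x = F + m
      · rw [if_neg h1, if_pos h2]; exact hB2m
      · rw [if_neg h1, if_neg h2]; exact hsurv x hxA h1 h2
  · intro x hxA y hyA hfxy
    simp only [Set.mem_setOf_eq] at hxA hyA
    beta_reduce at hfxy
    have h2mS : (2:ℕ) * m ∈ S := by rw [two_mul]; exact hSadd m hmS m hmS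
    by_cases h1 : x = m
    · rw [if_pos h1] at hfxy
      by_cases h2 : y = m
      · omega
      · rw [if_neg h2] at hfxy
        by_cases h4 : y = F + m
        · rw [if_pos h4] at hfxy
          exact absurd (by rw [hfxy]; exact h2mS : h ∈ S) hhS
        · rw [if_neg h4] at hfxy
          subst hfxy
          exact absurd hyA.1 hhS
    · rw [if_neg h1] at hfxy
      by_cases h3 : x = F + m
      · rw [if_pos h3] at hfxy
        by_cases h2 : y = m
        · rw [if_pos h2] at hfxy
          exact absurd (by rw [← hfxy]; exact h2mS : h ∈ S) hhS
        · rw [if_neg h2] at hfxy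
          by_cases h4 : y = F + m
          · omega
          · rw [if_neg h4] at hfxy
            subst hfxy
            exact absurd hyA h2m_not
      · rw [if_neg h3] at hfxy
        by_cases h2 : y = m
        · rw [if_pos h2] at hfxy
          subst hfxy
          exact absurd hxA.1 hhS
        · rw [if_neg h2] at hfxy
          by_cases h4 : y = F + m
          · rw [if_pos h4] at hfxy
            subst hfxy
            exact absurd hxA h2m_not
          · rw [if_neg h4] at hfxy
            exact hfxy
end

section
/- Let S be a non-special numerical semigroup. Then there exists r ∈ ℕ such that the r-th iterate A^r(S) of the transform A equals the almost-ordinary numerical semigroup {0} ∪ {g, g+1, …, g+n-2} ∪ {m : m ≥ g+n}, where g = g(S) and n = n(S). -/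
open Set

namespace NSaux

lemma le_frob_of_notMem {S : Set ℕ} (hS : IsNumSgp S) {y : ℕ} (hy : y ∉ S) : y ≤ frob S :=
  le_csSup hS.2.2.bddAbove hy

lemma mem_of_frob_lt {S : Set ℕ} (hS : IsNumSgp S) {y : ℕ} (hy : frob S < y) : y ∈ S := by
  by_contra h
  exact absurd (le_frob_of_notMem hS h) (not_le.2 hy)

lemma mult_mem {S : Set ℕ} (hS : IsNumSgp S) : mult S ∈ S ∧ mult S ≠ 0 := by
  have h1 : frob S + 1 ∈ S \ {0} :=
    ⟨mem_of_frob_lt hS (lt_add_one _), by simp⟩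
  have h2 : mult S ∈ S \ {0} := Nat.sInf_mem ⟨_, h1⟩
  exact ⟨h2.1, by simpa using h2.2⟩

lemma mult_le {S : Set ℕ} {y : ℕ} (hy : y ∈ S) (h0 : y ≠ 0) : mult S ≤ y :=
  Nat.sInf_le ⟨hy, by simpa using h0⟩

lemma notMem_of_lt_mult {S : Set ℕ} {y : ℕ} (h0 : y ≠ 0) (h2 : y < mult S) : y ∉ S :=
  fun hy => absurd (mult_le hy h0) (not_le.2 h2)

lemma frob_notMem {S : Set ℕ} (hS : IsNumSgp S) (hne : Sᶜ.Nonempty) : frob S ∉ S :=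
  hne.csSup_mem hS.2.2

/-- The key lemma: a special numerical semigroup with a special gap `h` other than the
Frobenius number and whose multiplicity is below the Frobenius number has no gaps strictly
between the multiplicity and the Frobenius number. -/
lemma key {T : Set ℕ} (hT : IsNumSgp T) (hspec : IsSpecial T) {h : ℕ}
    (hh : h ∈ SG T) (hne : h ≠ frob T) (hmF : mult T < frob T) (hF : frob T ∉ T) :
    ∀ y, mult T < y → y < frob T → y ∈ T := by
  obtain ⟨hhT, hh2, hhadd⟩ := hh
  have hhm : h < mult T := hspec h ⟨hhT, hh2, hhadd⟩ hne
  have hh0 : h ≠ 0 := fun e => hhT (e ▸ hT.1)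
  by_contra hcon
  push_neg at hcon
  obtain ⟨y0, hy01, hy02, hy03⟩ := hcon
  set F := frob T with hFdef
  set G : Set ℕ := Tᶜ ∩ Set.Ioo (mult T) F with hGdef
  have hGfin : G.Finite := hT.2.2.subset (inter_subset_left)
  have hGne : G.Nonempty := ⟨y0, hy03, hy01, hy02⟩
  set y := sSup G with hydef
  have hyG : y ∈ G := hGne.csSup_mem hGfin
  have hub : ∀ z ∈ G, z ≤ y := fun z hz => le_csSup hGfin.bddAbove hz
  obtain ⟨hyT, hym, hyF⟩ := hyG
  have hyT : y ∉ T := hyT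
  have memT : ∀ z, y < z → z ≠ F → z ∈ T := by
    intro z h1 h2
    rcases lt_or_gt_of_ne h2 with h3 | h3
    · by_contra h4
      exact absurd (hub z ⟨h4, lt_trans hym h1, h3⟩) (not_le.2 h1)
    · exact mem_of_frob_lt hT h3
  have hFh : F - h ∉ T := by
    intro c
    have hne0 : F - h ≠ 0 := by omega
    have := hhadd (F - h) c hne0
    rw [Nat.add_sub_cancel' (by omega : h ≤ F)] at this
    exact hF this
  by_cases hcase : F - y ∈ T
  · -- Case 1: F - y is a nonzero element, hence ≥ mult T
    have h1 : mult T ≤ F - y := mult_le hcase (by omega)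
    have h2 : F - h ∈ G := ⟨hFh, by omega, by omega⟩
    have := hub _ h2
    omega
  · by_cases hcase2 : y + y = F
    · -- Case 3: 2y = F; then F - h is a gap strictly between y and F
      have h2 : F - h ∈ G := ⟨hFh, by omega, by omega⟩
      have := hub _ h2
      omega
    · -- Case 2: y is a special gap ≥ mult T, contradicting speciality
      have hySG : y ∈ SG T := by
        refine ⟨hyT, ?_, ?_⟩
        · have : y + y ∈ T := memT (y + y) (by omega) hcase2
          simpa [two_mul] using this
        · intro s hs hs0
          have hsm : mult T ≤ s := mult_le hs hs0
          refine memT (y + s) (by omega) ?_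
          intro e
          have hFy : F - y = s := by omega
          exact hcase (hFy ▸ hs)
      have := hspec y hySG (by omega)
      omega

/-- In the special almost-ordinary situation, `T` equals the canonical set. -/
lemma special_shape {T : Set ℕ} (hT : IsNumSgp T) (hspec : IsSpecial T) {h : ℕ}
    (hh : h ∈ SG T) (hne : h ≠ frob T) (hmF : mult T < frob T) (hF : frob T ∉ T) :
    T = {0} ∪ {x | genus T ≤ x ∧ x ≤ genus T + leftEls T - 2} ∪ {x | genus T + leftEls T ≤ x} := by
  set F := frob T with hFdef
  set m := mult T with hmdef
  have hkey := key hT hspec hh hne hmF hF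
  have hm := mult_mem hT
  have hm0 : m ≠ 0 := hm.2
  have hmT : m ∈ T := hm.1
  -- gaps of T are exactly Ioo 0 m ∪ {F}
  have hcompl : Tᶜ = Set.Ioo 0 m ∪ {F} := by
    ext z
    simp only [mem_compl_iff, mem_union, mem_Ioo, mem_singleton_iff]
    constructor
    · intro hz
      rcases lt_trichotomy z m with h1 | h1 | h1
      · exact Or.inl ⟨Nat.pos_of_ne_zero (fun e => hz (e ▸ hT.1)), h1⟩
      · exact absurd (h1 ▸ hmT) hz
      · right
        by_contra h2
        rcases lt_trichotomy z F with h3 | h3 | h3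
        · exact hz (hkey z h1 h3)
        · exact h2 h3
        · exact hz (mem_of_frob_lt hT h3)
    · rintro (⟨h1, h2⟩ | h1)
      · exact notMem_of_lt_mult (by omega) h2
      · exact h1 ▸ hF
  have hgen : genus T = m := by
    have h1 : Set.Ioo 0 m = ((Finset.Ioo 0 m : Finset ℕ) : Set ℕ) := (Finset.coe_Ioo 0 m).symm
    have hdisj : Disjoint (Set.Ioo 0 m) ({F} : Set ℕ) := by
      simp only [Set.disjoint_singleton_right, mem_Ioo]
      omega
    rw [genus, hcompl, Set.ncard_union_eq hdisj (h1 ▸ (Finset.Ioo 0 m).finite_toSet)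
      (finite_singleton F), h1, Set.ncard_coe_finset, Nat.card_Ioo, Set.ncard_singleton]
    omega
  have hleft : leftEls T = F - m + 1 := by
    have hset : {s ∈ T | s < frob T} = {0} ∪ Set.Ico m F := by
      ext z
      simp only [mem_setOf_eq, mem_union, mem_singleton_iff, mem_Ico]
      constructor
      · rintro ⟨h1, h2⟩
        rcases Nat.eq_zero_or_pos z with h3 | h3
        · exact Or.inl h3
        · refine Or.inr ⟨?_, h2⟩
          by_contra h4
          exact notMem_of_lt_mult (by omega) (by omega) h1
      · rintro (h1 | ⟨h1, h2⟩)
        · exact ⟨h1 ▸ hT.1, by omega⟩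
        · rcases eq_or_lt_of_le h1 with h3 | h3
          · exact ⟨h3 ▸ hmT, h2⟩
          · exact ⟨hkey z h3 h2, h2⟩
    have h1 : Set.Ico m F = ((Finset.Ico m F : Finset ℕ) : Set ℕ) := (Finset.coe_Ico m F).symm
    have hdisj : Disjoint ({0} : Set ℕ) (Set.Ico m F) := by
      simp only [Set.disjoint_singleton_left, mem_Ico]
      omega
    rw [leftEls, hset, Set.ncard_union_eq hdisj (finite_singleton 0)
      (h1 ▸ (Finset.Ico m F).finite_toSet), h1, Set.ncard_coe_finset, Nat.card_Ico,
      Set.ncard_singleton]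
    omega
  rw [hgen, hleft]
  ext z
  simp only [mem_union, mem_singleton_iff, mem_setOf_eq]
  constructor
  · intro hz
    rcases Nat.eq_zero_or_pos z with h0 | h0
    · exact Or.inl (Or.inl h0)
    have hzm : m ≤ z := by
      by_contra h1
      exact notMem_of_lt_mult (by omega) (by omega) hz
    rcases lt_trichotomy z F with h1 | h1 | h1
    · exact Or.inl (Or.inr ⟨hzm, by omega⟩)
    · exact absurd (h1 ▸ hz) hF
    · exact Or.inr (by omega)
  · rintro ((h0 | ⟨h1, h2⟩) | h1)
    · exact h0 ▸ hT.1
    · rcases eq_or_lt_of_le h1 with h3 | h3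
      · exact h3 ▸ hmT
      · exact hkey z h3 (by omega)
    · exact mem_of_frob_lt hT (by omega)

/-- All the facts about one application of the transform to a non-special semigroup. -/
lemma step {S : Set ℕ} (hS : IsNumSgp S) (hsp : ¬ IsSpecial S) :
    IsNumSgp (Atrans S) ∧ frob (Atrans S) = frob S ∧ genus (Atrans S) = genus S ∧
      leftEls (Atrans S) = leftEls S ∧ mult S < mult (Atrans S) ∧
      mult (Atrans S) < frob (Atrans S) ∧ mult S ∈ SG (Atrans S) ∧
      frob (Atrans S) ∉ Atrans S ∧
      ((Atrans S)ᶜ ∩ {x | mult (Atrans S) < x}).ncard < (Sᶜ ∩ {x | mult S < x}).ncard := by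
  rw [IsSpecial] at hsp
  push_neg at hsp
  obtain ⟨h0, hh0SG, hh0ne, hh0ge⟩ := hsp
  set m := mult S with hmdef
  set F := frob S with hFdef
  set α := sSup (SG S \ {F}) with hadef
  obtain ⟨hmS, hm0⟩ := mult_mem hS
  have hsub : SG S \ {F} ⊆ Sᶜ := fun z hz => hz.1.1
  have hfin : (SG S \ {F}).Finite := hS.2.2.subset hsub
  have hne : (SG S \ {F}).Nonempty := ⟨h0, hh0SG, by simpa using hh0ne⟩
  have hαmem : α ∈ SG S \ {F} := hne.csSup_mem hfin
  obtain ⟨⟨hαS, hα2, hαadd⟩, hαF'⟩ := hαmem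
  have hαF : α ≠ F := by simpa using hαF'
  have hαge : m ≤ α := le_trans hh0ge (le_csSup hfin.bddAbove ⟨hh0SG, by simpa using hh0ne⟩)
  have hαm : m < α := lt_of_le_of_ne hαge (fun e => hαS (e ▸ hmS))
  have hαltF : α < F := lt_of_le_of_ne (le_frob_of_notMem hS hαS) hαF
  have hFS : F ∉ S := frob_notMem hS ⟨α, hαS⟩
  have hA : Atrans S = (S ∪ {α}) \ {m} := rfl
  have hmem : ∀ z, z ∈ Atrans S ↔ (z ∈ S ∨ z = α) ∧ z ≠ m := by
    intro z
    rw [hA]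
    simp only [Set.mem_diff, Set.mem_union, Set.mem_singleton_iff]
  have hαT : α ∈ Atrans S := (hmem α).2 ⟨Or.inr rfl, by omega⟩
  have hmT : m ∉ Atrans S := fun c => ((hmem m).1 c).2 rfl
  have hT : IsNumSgp (Atrans S) := by
    refine ⟨(hmem 0).2 ⟨Or.inl hS.1, fun e => hm0 e.symm⟩, ?_, ?_⟩
    · intro a ha b hb
      rw [hmem] at ha hb ⊢
      obtain ⟨ha1, ha2⟩ := ha
      obtain ⟨hb1, hb2⟩ := hb
      have haz : a ∈ S → a ≠ 0 → m ≤ a := fun h1 h2 => mult_le h1 h2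
      rcases ha1 with ha1 | ha1 <;> rcases hb1 with hb1 | hb1
      · refine ⟨Or.inl (hS.2.1 a ha1 b hb1), ?_⟩
        rcases Nat.eq_zero_or_pos a with h1 | h1
        · omega
        rcases Nat.eq_zero_or_pos b with h2 | h2
        · omega
        have := mult_le ha1 (by omega)
        have := mult_le hb1 (by omega)
        omega
      · subst hb1
        rcases Nat.eq_zero_or_pos a with h1 | h1
        · subst h1; exact ⟨Or.inr (by omega), by omega⟩
        · have := mult_le ha1 (by omega)
          exact ⟨Or.inl (by rw [add_comm]; exact hαadd a ha1 (by omega)), by omega⟩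
      · subst ha1
        rcases Nat.eq_zero_or_pos b with h1 | h1
        · subst h1; exact ⟨Or.inr rfl, by omega⟩
        · have := mult_le hb1 (by omega)
          exact ⟨Or.inl (hαadd b hb1 (by omega)), by omega⟩
      · subst ha1; subst hb1
        exact ⟨Or.inl (by simpa [two_mul] using hα2), by omega⟩
    · refine Set.Finite.subset (hS.2.2.union (Set.finite_singleton m)) ?_
      intro z hz
      rw [Set.mem_compl_iff, hmem] at hz
      by_cases h1 : z = m
      · exact Or.inr h1
      · exact Or.inl (fun c => hz ⟨Or.inl c, h1⟩)
  have hTc : (Atrans S)ᶜ = insert m (Sᶜ \ {α}) := by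
    ext z
    rw [Set.mem_compl_iff, hmem]
    simp only [Set.mem_insert_iff, Set.mem_diff, Set.mem_compl_iff, Set.mem_singleton_iff]
    by_cases h1 : z = m <;> by_cases h2 : z = α <;> by_cases h3 : z ∈ S <;> tauto
  have hFT : F ∉ Atrans S := fun c => by
    rcases ((hmem F).1 c).1 with h1 | h1
    · exact hFS h1
    · omega
  have hfrobT : frob (Atrans S) = F := by
    apply le_antisymm
    · apply csSup_le ⟨F, hFT⟩
      intro z hz
      rw [Set.mem_compl_iff, hmem] at hz
      by_cases h1 : z = m
      · omega
      · exact le_frob_of_notMem hS (fun c => hz ⟨Or.inl c, h1⟩)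
    · exact le_csSup hT.2.2.bddAbove hFT
  have hgenT : genus (Atrans S) = genus S := by
    rw [genus, genus, hTc,
      Set.ncard_insert_of_notMem (by simp [hmdef, hmS]) ((hS.2.2.diff)),
      Set.ncard_diff_singleton_add_one (show α ∈ Sᶜ from hαS) hS.2.2]
  have hmultT : m < mult (Atrans S) := by
    obtain ⟨h1, h2⟩ := mult_mem hT
    rw [hmem] at h1
    rcases h1.1 with h3 | h3
    · exact lt_of_le_of_ne (mult_le h3 h2) (Ne.symm h1.2)
    · omega
  have hmultTF : mult (Atrans S) < frob (Atrans S) := by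
    rw [hfrobT]
    have := mult_le (S := Atrans S) hαT (by omega)
    omega
  have hleftT : leftEls (Atrans S) = leftEls S := by
    rw [leftEls, leftEls, hfrobT, ← hFdef]
    have hset : {s ∈ Atrans S | s < F} = insert α ({s ∈ S | s < F} \ {m}) := by
      ext z
      simp only [Set.mem_setOf_eq, Set.mem_insert_iff, Set.mem_diff, Set.mem_singleton_iff, hmem]
      constructor
      · rintro ⟨⟨h1 | h1, h2⟩, h3⟩
        · exact Or.inr ⟨⟨h1, h3⟩, h2⟩
        · exact Or.inl h1
      · rintro (h1 | ⟨⟨h1, h2⟩, h3⟩)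
        · exact ⟨⟨Or.inr h1, by omega⟩, by omega⟩
        · exact ⟨⟨Or.inl h1, h3⟩, h2⟩
    have hfin2 : {s ∈ S | s < F}.Finite :=
      (Set.finite_Iio F).subset (fun z hz => hz.2)
    rw [hset, Set.ncard_insert_of_notMem (fun c => hαS c.1.1) (hfin2.diff),
      Set.ncard_diff_singleton_add_one (show m ∈ {s ∈ S | s < F} from ⟨hmS, by omega⟩) hfin2]
  have hmSG : m ∈ SG (Atrans S) := by
    refine ⟨hmT, ?_, ?_⟩
    · rw [hmem]
      refine ⟨Or.inl (by simpa [two_mul] using hS.2.1 m hmS m hmS), by omega⟩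
    · intro s hs hs0
      rw [hmem] at hs ⊢
      rcases hs.1 with h1 | h1
      · have := mult_le h1 hs0
        exact ⟨Or.inl (hS.2.1 m hmS s h1), by omega⟩
      · subst h1
        have := hαadd m hmS hm0
        exact ⟨Or.inl (by rwa [add_comm]), by omega⟩
  refine ⟨hT, hfrobT, hgenT, hleftT, hmultT, hmultTF, hmSG, hfrobT ▸ hFT, ?_⟩
  apply Set.ncard_lt_ncard
  · constructor
    · intro z hz
      obtain ⟨hz1, hz2⟩ := hz
      rw [hTc] at hz1
      simp only [Set.mem_insert_iff, Set.mem_diff, Set.mem_singleton_iff] at hz1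
      simp only [Set.mem_setOf_eq] at hz2
      rcases hz1 with h1 | h1
      · omega
      · exact ⟨h1.1, by simp only [Set.mem_setOf_eq]; omega⟩
    · intro hsub2
      have : α ∈ (Atrans S)ᶜ ∩ {x | mult (Atrans S) < x} :=
        hsub2 ⟨hαS, by simp only [Set.mem_setOf_eq]; omega⟩
      exact this.1 hαT
  · exact (hS.2.2.inter_of_left _)



lemma main : ∀ (k : ℕ) (S : Set ℕ), IsNumSgp S → ¬ IsSpecial S →
    (Sᶜ ∩ {x | mult S < x}).ncard ≤ k →
    ∃ r : ℕ, Atrans^[r] S =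
      {0} ∪ {x | genus S ≤ x ∧ x ≤ genus S + leftEls S - 2} ∪ {x | genus S + leftEls S ≤ x} := by
  intro k
  induction k with
  | zero =>
    intro S hS hsp hk
    obtain ⟨_, _, _, _, _, _, _, _, hmu⟩ := step hS hsp
    omega
  | succ k ih =>
    intro S hS hsp hk
    obtain ⟨hT, hfrob, hgen, hleft, hmult, hmultF, hmSG, hFT, hmu⟩ := step hS hsp
    by_cases hspT : IsSpecial (Atrans S)
    · refine ⟨1, ?_⟩
      rw [Function.iterate_one]
      have hne : mult S ≠ frob (Atrans S) := by omega
      have := special_shape hT hspT hmSG hne hmultF hFT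
      rw [hgen, hleft] at this
      exact this
    · obtain ⟨r, hr⟩ := ih (Atrans S) hT hspT (by omega)
      rw [hgen, hleft] at hr
      exact ⟨r + 1, by rw [Function.iterate_succ_apply]; exact hr⟩

end NSaux

theorem Atrans_reaches_almost_ordinary (S : Set ℕ) (hS : IsNumSgp S) (hsp : ¬ IsSpecial S) :
    ∃ r : ℕ, Atrans^[r] S =
      {0} ∪ {x | genus S ≤ x ∧ x ≤ genus S + leftEls S - 2} ∪ {x | genus S + leftEls S ≤ x} := by
  exact NSaux.main _ S hS hsp le_rfl
end

section
/- Let S be a numerical semigroup that is neither ordinary nor almost-ordinary, and suppose there exists a gap x of S with F(S) - m(S) + 1 ≤ x < F(S). Then u(S) = max(SG(S) \ {F(S)}), i.e., the sub-Frobenius number is the largest special gap different from F(S). In particular u(S) is a special gap of S. -/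
open Set

theorem subFrob_is_max_special_gap (S : Set ℕ) (hS : IsNumSgp S)
    (hord : ¬ IsOrdinary S) (hao : ¬ IsAlmostOrdinary S)
    (hx : ∃ x : ℕ, x ∉ S ∧ frob S - mult S + 1 ≤ x ∧ x < frob S) :
    subFrob S = sSup (SG S \ {frob S}) ∧ subFrob S ∈ SG S := by
  obtain ⟨h0, hadd, hfin⟩ := hS
  obtain ⟨x, hxS, hx1, hx2⟩ := hx
  have hne : Sᶜ.Nonempty := ⟨x, hxS⟩
  have hbdd : BddAbove Sᶜ := hfin.bddAbove
  have hF : frob S ∈ Sᶜ := Nat.sSup_mem hne hbdd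
  have hbig : ∀ n, frob S < n → n ∈ S := by
    intro n hn
    by_contra h
    have hle : n ≤ frob S := le_csSup hbdd h
    omega
  have hSm : (S \ {0}).Nonempty := ⟨frob S + 1, hbig _ (by omega), by simp⟩
  have hm1 : mult S ∈ S := (Nat.sInf_mem hSm).1
  have hm0 : mult S ≠ 0 := (Nat.sInf_mem hSm).2
  have hmle : ∀ s ∈ S, s ≠ 0 → mult S ≤ s := fun s hs hs0 => Nat.sInf_le ⟨hs, hs0⟩
  have hmltF : mult S < frob S := by
    rcases lt_trichotomy (mult S) (frob S) with h | h | h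
    · exact h
    · exact absurd (h ▸ hm1) hF
    · exfalso
      apply hord
      refine ⟨mult S, ?_⟩
      ext n
      simp only [Set.mem_union, Set.mem_singleton_iff, Set.mem_setOf_eq]
      constructor
      · intro hn
        by_cases h0' : n = 0
        · exact Or.inl h0'
        · exact Or.inr (hmle n hn h0')
      · rintro (rfl | hn)
        · exact h0
        · exact hbig n (by omega)
  have hxmem : x ∈ Sᶜ \ {frob S} := ⟨hxS, by simp; omega⟩
  have hne2 : (Sᶜ \ {frob S}).Nonempty := ⟨x, hxmem⟩
  have hbdd2 : BddAbove (Sᶜ \ {frob S}) := (hfin.subset Set.diff_subset).bddAbove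
  have hu : subFrob S ∈ Sᶜ \ {frob S} := Nat.sSup_mem hne2 hbdd2
  have hux : x ≤ subFrob S := le_csSup hbdd2 hxmem
  have huF : subFrob S < frob S :=
    lt_of_le_of_ne (le_csSup hbdd hu.1) (by simpa using hu.2)
  have hgap : ∀ n, subFrob S < n → n ≠ frob S → n ∈ S := by
    intro n h1 h2
    by_contra h
    have : n ≤ subFrob S := le_csSup hbdd2 ⟨h, h2⟩
    omega
  have hu0 : subFrob S ≠ 0 := fun h => hu.1 (h ▸ h0)
  have h2uF : 2 * subFrob S ≠ frob S := by
    intro h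
    apply hao
    have heq : {h | h ∉ S ∧ mult S < h} = {frob S} := by
      ext n
      simp only [Set.mem_setOf_eq, Set.mem_singleton_iff]
      constructor
      · rintro ⟨hn, hmn⟩
        by_contra hnF
        have : n ≤ subFrob S := le_csSup hbdd2 ⟨hn, hnF⟩
        omega
      · rintro rfl
        exact ⟨hF, hmltF⟩
    rw [IsAlmostOrdinary, heq]
    simp
  have huSG : subFrob S ∈ SG S := by
    refine ⟨hu.1, hgap _ (by omega) h2uF, ?_⟩
    intro s hs hs0
    have := hmle s hs hs0
    exact hbig _ (by omega)
  have hSGsub : SG S \ {frob S} ⊆ Sᶜ \ {frob S} := fun n hn => ⟨hn.1.1, hn.2⟩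
  have hbdd3 : BddAbove (SG S \ {frob S}) :=
    ((hfin.subset Set.diff_subset).subset hSGsub).bddAbove
  refine ⟨le_antisymm ?_ ?_, huSG⟩
  · exact le_csSup hbdd3 ⟨huSG, hu.2⟩
  · exact csSup_le ⟨subFrob S, huSG, hu.2⟩ fun n hn => le_csSup hbdd2 (hSGsub hn)
end

section
/- Let S be a numerical semigroup that is neither ordinary nor almost-ordinary, and let B(S) = (S \ {m(S)}) ∪ {u(S)} where u(S) is the sub-Frobenius number. Then B(S) is a numerical semigroup and e(B(S)) ≥ e(S), where e denotes the embedding dimension. -/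
open Set

theorem Btrans_numsgp_and_edim (S : Set ℕ) (hS : IsNumSgp S)
    (hord : ¬ IsOrdinary S) (hao : ¬ IsAlmostOrdinary S) :
    IsNumSgp (Btrans S) ∧ edim (Btrans S) ≥ edim S := by
  obtain ⟨h0, hadd, hfin⟩ := hS
  -- basic facts about m
  have hSne : (S \ {0}).Nonempty := by
    have hf : (Sᶜ ∪ {0} : Set ℕ).Finite := hfin.union (Set.finite_singleton 0)
    obtain ⟨n, hn⟩ := hf.infinite_compl.nonempty
    simp only [Set.mem_compl_iff, Set.mem_union, Set.mem_singleton_iff, not_or] at hn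
    exact ⟨n, by simpa using hn.1, by simpa using hn.2⟩
  have hmmem := Nat.sInf_mem hSne
  have hmS : mult S ∈ S := hmmem.1
  have hm0 : mult S ≠ 0 := fun h => hmmem.2 (Set.mem_singleton_iff.mpr h)
  have m_le : ∀ s ∈ S, s ≠ 0 → mult S ≤ s := fun s hs hs0 => Nat.sInf_le ⟨hs, hs0⟩
  -- the set of gaps above m has at least two elements
  have hTne : {h | h ∉ S ∧ mult S < h}.Nonempty := by
    by_contra hemp
    rw [Set.not_nonempty_iff_eq_empty] at hemp
    have hall : ∀ x, x ∈ S ∨ x ≤ mult S := by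
      intro x
      by_contra hx
      push_neg at hx
      exact Set.eq_empty_iff_forall_notMem.mp hemp x ⟨hx.1, hx.2⟩
    apply hord
    refine ⟨mult S, ?_⟩
    ext x
    simp only [Set.mem_union, Set.mem_singleton_iff, Set.mem_setOf_eq]
    constructor
    · intro hx
      rcases eq_or_ne x 0 with h | h
      · exact Or.inl h
      · exact Or.inr (m_le x hx h)
    · rintro (rfl | hx)
      · exact h0
      · rcases eq_or_lt_of_le hx with h | h
        · exact h ▸ hmS
        · rcases hall x with h' | h'
          · exact h'
          · omega
  have hTfin : {h | h ∉ S ∧ mult S < h}.Finite := hfin.subset (fun x hx => hx.1)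
  have hT2 : 1 < {h | h ∉ S ∧ mult S < h}.ncard := by
    have h1 : 0 < {h | h ∉ S ∧ mult S < h}.ncard := (Set.ncard_pos hTfin).2 hTne
    have h2 : {h | h ∉ S ∧ mult S < h}.ncard ≠ 1 := hao
    omega
  -- facts about F
  have hScne : (Sᶜ : Set ℕ).Nonempty := by
    obtain ⟨t, ht⟩ := hTne; exact ⟨t, ht.1⟩
  have hFmem : frob S ∈ Sᶜ := Nat.sSup_mem hScne hfin.bddAbove
  have hFS : frob S ∉ S := hFmem
  have hFub : ∀ x, x ∉ S → x ≤ frob S := fun x hx => le_csSup hfin.bddAbove hx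
  have hgtF : ∀ x, frob S < x → x ∈ S := by
    intro x hx
    by_contra h
    exact absurd (hFub x h) (by omega)
  have hFm : mult S < frob S := by
    obtain ⟨t, ht⟩ := hTne
    exact lt_of_lt_of_le ht.2 (hFub t ht.1)
  -- facts about u
  obtain ⟨t, htT, htF⟩ := Set.exists_ne_of_one_lt_ncard hT2 (frob S)
  have hUne : (Sᶜ \ {frob S} : Set ℕ).Nonempty := ⟨t, htT.1, by simpa using htF⟩
  have hUbdd : BddAbove (Sᶜ \ {frob S} : Set ℕ) := (hfin.subset Set.diff_subset).bddAbove
  have humem := Nat.sSup_mem hUne hUbdd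
  have huS : subFrob S ∉ S := humem.1
  have huF : subFrob S ≠ frob S := by simpa [subFrob] using humem.2
  have hule : ∀ g, g ∉ S → g ≠ frob S → g ≤ subFrob S :=
    fun g hg hgF => le_csSup hUbdd ⟨hg, by simpa using hgF⟩
  have huFlt : subFrob S < frob S := lt_of_le_of_ne (hFub _ huS) huF
  have hum : mult S < subFrob S := lt_of_lt_of_le htT.2 (hule t htT.1 htF)
  -- F ≤ u + m
  have hFum : frob S ≤ subFrob S + mult S := by
    have h1 : frob S - mult S ∉ S := by
      intro h
      have := hadd _ h _ hmS
      rw [Nat.sub_add_cancel (le_of_lt hFm)] at this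
      exact hFS this
    have h2 : frob S - mult S ≠ frob S := by omega
    have := hule _ h1 h2
    omega
  -- B membership
  have hBmem : ∀ x, x ∈ Btrans S ↔ (x ∈ S ∧ x ≠ mult S) ∨ x = subFrob S := by
    intro x
    simp only [Btrans, Set.mem_union, Set.mem_diff, Set.mem_singleton_iff]
  have hBge : ∀ b ∈ Btrans S, b ≠ 0 → mult S + 1 ≤ b := by
    intro b hb hb0
    rw [hBmem] at hb
    rcases hb with ⟨hbS, hbm⟩ | rfl
    · have := m_le b hbS hb0; omega
    · omega
  have huB : subFrob S ∈ Btrans S := (hBmem _).2 (Or.inr rfl)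
  -- closure of B
  have keyu : ∀ b ∈ Btrans S, b ≠ 0 → subFrob S + b ∈ Btrans S := by
    intro b hb hb0
    have hbm := hBge b hb hb0
    have hFlt : frob S < subFrob S + b := by omega
    exact (hBmem _).2 (Or.inl ⟨hgtF _ hFlt, by omega⟩)
  have hBadd : ∀ a ∈ Btrans S, ∀ b ∈ Btrans S, a + b ∈ Btrans S := by
    intro a ha b hb
    rcases (hBmem a).1 ha with ⟨haS, ham⟩ | rfl
    · rcases (hBmem b).1 hb with ⟨hbS, hbm⟩ | rfl
      · refine (hBmem _).2 (Or.inl ⟨hadd a haS b hbS, ?_⟩)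
        intro he
        rcases eq_or_ne a 0 with rfl | ha0
        · exact hbm (by omega)
        · have := m_le a haS ha0
          have hb0 : b = 0 := by omega
          exact ham (by omega)
      · rcases eq_or_ne a 0 with rfl | ha0
        · simpa using huB
        · have := keyu a ha ha0
          rwa [add_comm] at this
    · rcases (hBmem b).1 hb with ⟨hbS, hbm⟩ | rfl
      · rcases eq_or_ne b 0 with rfl | hb0
        · simpa using huB
        · exact keyu b hb hb0
      · exact keyu _ huB (by omega)
  have hBnum : IsNumSgp (Btrans S) := by
    refine ⟨(hBmem 0).2 (Or.inl ⟨h0, fun h => hm0 h.symm⟩), hBadd, ?_⟩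
    refine (hfin.union (Set.finite_singleton (mult S))).subset ?_
    intro x hx
    have := (hBmem x).not.1 hx
    push_neg at this
    simp only [Set.mem_union, Set.mem_compl_iff, Set.mem_singleton_iff]
    by_cases hxS : x ∈ S
    · exact Or.inr (this.1 hxS)
    · exact Or.inl hxS
  -- the killed-generator lemma: a minimal generator of S (≠ m) that decomposes in B must equal F + m
  have hK : ∀ x, IsMinGen S x → x ≠ mult S →
      (∃ a ∈ Btrans S, ∃ b ∈ Btrans S, a ≠ 0 ∧ b ≠ 0 ∧ x = a + b) → x = frob S + mult S := by
    rintro x hx hxm ⟨a, ha, b, hb, ha0, hb0, hxe⟩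
    have hage := hBge a ha ha0
    have hbge := hBge b hb hb0
    have main : ∀ c, mult S + 1 ≤ c → x = subFrob S + c → x = frob S + mult S := by
      intro c hc he
      have hxF : frob S < x := by omega
      have hxmS : x - mult S ∉ S := by
        intro hmem
        exact hx.2.2 ⟨x - mult S, hmem, mult S, hmS, by omega, hm0, by omega⟩
      have hne : x - mult S = frob S := by
        by_contra hne
        have := hule _ hxmS hne
        omega
      omega
    rcases (hBmem a).1 ha with ⟨haS, _⟩ | rfl
    · rcases (hBmem b).1 hb with ⟨hbS, _⟩ | rfl
      · exact absurd ⟨a, haS, b, hbS, ha0, hb0, hxe⟩ hx.2.2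
      · exact main a hage (by omega)
    · exact main b hbge hxe
  -- u is a minimal generator of B
  have hugen : IsMinGen (Btrans S) (subFrob S) := by
    refine ⟨huB, by omega, ?_⟩
    rintro ⟨a, ha, b, hb, ha0, hb0, he⟩
    have hage := hBge a ha ha0
    have hbge := hBge b hb hb0
    have haS : a ∈ S := by
      rcases (hBmem a).1 ha with ⟨h, _⟩ | rfl
      · exact h
      · omega
    have hbS : b ∈ S := by
      rcases (hBmem b).1 hb with ⟨h, _⟩ | rfl
      · exact h
      · omega
    exact huS (he ▸ hadd a haS b hbS)
  -- 2m is a minimal generator of B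
  have h2mgen : IsMinGen (Btrans S) (2 * mult S) := by
    have h2mS : 2 * mult S ∈ S := by
      have := hadd _ hmS _ hmS
      rwa [← two_mul] at this
    refine ⟨(hBmem _).2 (Or.inl ⟨h2mS, by omega⟩), by omega, ?_⟩
    rintro ⟨a, ha, b, hb, ha0, hb0, he⟩
    have := hBge a ha ha0
    have := hBge b hb hb0
    omega
  -- minimal generators of B form a finite set
  have hfinB : {x | IsMinGen (Btrans S) x}.Finite := by
    refine (Set.finite_Iic (2 * frob S + 2)).subset ?_
    intro x hx
    simp only [Set.mem_setOf_eq] at hx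
    by_contra hgt
    simp only [Set.mem_Iic, not_le] at hgt
    refine hx.2.2 ⟨frob S + 1, ?_, x - (frob S + 1), ?_, by omega, by omega, by omega⟩
    · exact (hBmem _).2 (Or.inl ⟨hgtF _ (by omega), by omega⟩)
    · exact (hBmem _).2 (Or.inl ⟨hgtF _ (by omega), by omega⟩)
  refine ⟨hBnum, ?_⟩
  -- the injection
  have hinj := Set.ncard_le_ncard_of_injOn
    (f := fun x => if x = mult S then 2 * mult S else if x = frob S + mult S then subFrob S else x)
    (s := {x | IsMinGen S x}) (t := {x | IsMinGen (Btrans S) x}) ?_ ?_ hfinB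
  · exact hinj
  · intro x hx
    simp only [Set.mem_setOf_eq] at hx ⊢
    by_cases h1 : x = mult S
    · rw [if_pos h1]
      exact h2mgen
    · by_cases h2 : x = frob S + mult S
      · rw [if_neg h1, if_pos h2]
        exact hugen
      · simp only [if_neg h1, if_neg h2]
        refine ⟨(hBmem x).2 (Or.inl ⟨hx.1, h1⟩), hx.2.1, ?_⟩
        intro hdec
        exact h2 (hK x hx h1 hdec)
  · intro x hx y hy he
    simp only [Set.mem_setOf_eq] at hx hy
    simp only at he
    by_cases h1 : x = mult S
    · by_cases h2 : y = mult S
      · omega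
      · rw [if_pos h1, if_neg h2] at he
        by_cases h3 : y = frob S + mult S
        · rw [if_pos h3] at he
          exact absurd (he ▸ (by have := hadd _ hmS _ hmS; rwa [← two_mul] at this : 2 * mult S ∈ S)) huS
        · rw [if_neg h3] at he
          exact absurd ⟨mult S, hmS, mult S, hmS, hm0, hm0, by omega⟩ hy.2.2
    · by_cases h2 : y = mult S
      · rw [if_neg h1, if_pos h2] at he
        by_cases h3 : x = frob S + mult S
        · rw [if_pos h3] at he
          exact absurd (he ▸ (by have := hadd _ hmS _ hmS; rwa [← two_mul] at this : 2 * mult S ∈ S) : subFrob S ∈ S) huS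
        · rw [if_neg h3] at he
          exact absurd ⟨mult S, hmS, mult S, hmS, hm0, hm0, by omega⟩ hx.2.2
      · rw [if_neg h1, if_neg h2] at he
        by_cases h3 : x = frob S + mult S
        · by_cases h4 : y = frob S + mult S
          · omega
          · rw [if_pos h3, if_neg h4] at he
            exact absurd (he ▸ hy.1) huS
        · by_cases h4 : y = frob S + mult S
          · rw [if_neg h3, if_pos h4] at he
            exact absurd (he ▸ hx.1 : subFrob S ∈ S) huS
          · rwa [if_neg h3, if_neg h4] at he
end
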